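/- arXiv:1807.03497 — 3 statements merged into one kernel-verified Lean document; each statement's English description precedes it below -/
import Mathlib

section
/- Let N ≥ 3, 2 ≤ β < N, and let k ∈ ℝ. Define w(y) = F((N+β)/4 − 1, (N−β)/4, 1/2; y) + k √y · F((N+β)/4 − 1/2, (N−β)/4 + 1/2, 3/2; y) for y ∈ [0,1), and set f(θ) = w(sin²θ) for θ ∈ [0, π/2). Then f(0) = 1 and f satisfies f''(θ) − (N−2) tan(θ) f'(θ) − ( (N−2)²/4 − (β−2)²/4 ) f(θ) = 0 for all θ ∈ (0, π/2). -/
open Real MeasureTheory Filter Set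

noncomputable section

/-- A Finsler norm on `ℝ^n`: nonnegative, `C²` away from the origin, with strictly
convex unit ball, positively `1`-homogeneous (even), and comparable to the Euclidean norm. -/
structure IsFinslerNorm {n : ℕ} (H : EuclideanSpace ℝ (Fin n) → ℝ) : Prop where
  nonneg : ∀ ξ, 0 ≤ H ξ
  contDiff : ContDiffOn ℝ 2 H {(0 : EuclideanSpace ℝ (Fin n))}ᶜ
  strictConvex : StrictConvex ℝ {ξ : EuclideanSpace ℝ (Fin n) | H ξ ≤ 1}
  homog : ∀ (c : ℝ) (ξ : EuclideanSpace ℝ (Fin n)), H (c • ξ) = |c| * H ξ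
  bounds : ∃ γ₁ γ₂ : ℝ, 0 < γ₁ ∧ γ₁ ≤ γ₂ ∧
    ∀ ξ, γ₁ * ‖ξ‖ ≤ H ξ ∧ H ξ ≤ γ₂ * ‖ξ‖

/-- The dual (polar) norm `H⁰(x) = sup_{ξ ≠ 0} ⟨ξ,x⟩ / H(ξ)`. -/
def dualNorm {n : ℕ} (H : EuclideanSpace ℝ (Fin n) → ℝ)
    (x : EuclideanSpace ℝ (Fin n)) : ℝ :=
  sSup ((fun ξ => (inner ℝ ξ x : ℝ) / H ξ) '' {ξ : EuclideanSpace ℝ (Fin n) | ξ ≠ 0})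

/-- The constant `K(N,β)`. -/
def KConst (N : ℕ) (β : ℝ) : ℝ :=
  2 * Real.Gamma ((N + β) / 4 - 1 / 2) * Real.Gamma ((N - β) / 4 + 1 / 2) /
    (Real.Gamma ((N + β) / 4 - 1) * Real.Gamma ((N - β) / 4))

/-- The hypergeometric series `F(a,b,c;y)`. -/
def hypergeom (a b c y : ℝ) : ℝ :=
  1 + Real.Gamma c / (Real.Gamma a * Real.Gamma b) *
    ∑' k : ℕ, Real.Gamma (a + (k + 1 : ℕ)) * Real.Gamma (b + (k + 1 : ℕ)) /
      Real.Gamma (c + (k + 1 : ℕ)) * y ^ (k + 1) / (Nat.factorial (k + 1) : ℝ)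

/-- The spatial part `∇ₓu` of the full gradient of `u : ℝ^n × ℝ → ℝ`. -/
def gradX {n : ℕ} (u : EuclideanSpace ℝ (Fin n) × ℝ → ℝ)
    (z : EuclideanSpace ℝ (Fin n) × ℝ) : EuclideanSpace ℝ (Fin n) :=
  gradient (fun y => u (y, z.2)) z.1

/-- The `t`-part `∂u/∂t` of the full gradient of `u : ℝ^n × ℝ → ℝ`. -/
def dT {n : ℕ} (u : EuclideanSpace ℝ (Fin n) × ℝ → ℝ)
    (z : EuclideanSpace ℝ (Fin n) × ℝ) : ℝ :=
  deriv (fun s => u (z.1, s)) z.2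

/-- The full gradient `∇u = (∇ₓ u, ∂u/∂t)`. -/
def grad2 {n : ℕ} (u : EuclideanSpace ℝ (Fin n) × ℝ → ℝ)
    (z : EuclideanSpace ℝ (Fin n) × ℝ) : EuclideanSpace ℝ (Fin n) × ℝ :=
  (gradX u z, dT u z)

/-- Divergence of a vector field on `ℝ^n × ℝ` (sum of all `n+1` partial derivatives). -/
def div2 {n : ℕ} (V : EuclideanSpace ℝ (Fin n) × ℝ → EuclideanSpace ℝ (Fin n) × ℝ)
    (z : EuclideanSpace ℝ (Fin n) × ℝ) : ℝ :=
  (∑ i, (fderiv ℝ V z (EuclideanSpace.single i 1, 0)).1 i) + (fderiv ℝ V z (0, 1)).2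

/-- Finsler Laplacian `Δ_Φ φ = div (Φ(∇φ) ∇Φ(∇φ))` on `ℝ^n × ℝ`. -/
def finslerLap {n : ℕ} (Φ φ : EuclideanSpace ℝ (Fin n) × ℝ → ℝ)
    (z : EuclideanSpace ℝ (Fin n) × ℝ) : ℝ :=
  div2 (fun w => Φ (grad2 φ w) • grad2 Φ (grad2 φ w)) z



/-- Geometric bound on coefficients satisfying a hypergeometric-type recurrence. -/
lemma coeff_geom_bound (c : ℕ → ℝ) (ν lam : ℝ)
    (hrec : ∀ m : ℕ, ((m : ℝ) + 2) * ((m : ℝ) + 1) * c (m + 2) =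
      ((m : ℝ) ^ 2 + ν * m + lam) * c m)
    (q : ℝ) (hq : 1 < q) : ∃ C > 0, ∀ m, |c m| ≤ C * q ^ m := by
  obtain ⟨M, hM1, hM⟩ : ∃ M : ℕ, 1 ≤ M ∧ (|ν| + |lam|) ≤ (q ^ 2 - 1) * M := by
    obtain ⟨M, hM⟩ := exists_nat_ge ((|ν| + |lam|) / (q ^ 2 - 1))
    refine ⟨M + 1, le_add_self, ?_⟩
    have hq2 : 0 < q ^ 2 - 1 := by nlinarith
    rw [div_le_iff₀ hq2] at hM
    push_cast
    nlinarith [abs_nonneg ν, abs_nonneg lam]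
  -- step bound
  have hstep : ∀ m : ℕ, M ≤ m → |c (m + 2)| ≤ q ^ 2 * |c m| := by
    intro m hm
    have hm1 : (1 : ℝ) ≤ (m : ℝ) := by exact_mod_cast hM1.trans hm
    have hmM : (M : ℝ) ≤ (m : ℝ) := by exact_mod_cast hm
    have hpos : (0 : ℝ) < ((m : ℝ) + 2) * ((m : ℝ) + 1) := by positivity
    have h1 : |((m : ℝ) + 2) * ((m : ℝ) + 1) * c (m + 2)| =
        |(m : ℝ) ^ 2 + ν * m + lam| * |c m| := by rw [hrec m, abs_mul]
    rw [abs_mul, abs_of_pos hpos] at h1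
    have h2 : |(m : ℝ) ^ 2 + ν * m + lam| ≤ q ^ 2 * (((m : ℝ) + 2) * ((m : ℝ) + 1)) := by
      have hb : (q ^ 2 - 1) * (m : ℝ) ^ 2 ≥ (|ν| + |lam|) * (m : ℝ) := by
        have := mul_le_mul_of_nonneg_right (hM.trans (mul_le_mul_of_nonneg_left hmM (by nlinarith)))
          (le_trans zero_le_one hm1)
        nlinarith
      rw [abs_le]
      constructor
      · nlinarith [neg_abs_le ν, neg_abs_le lam, le_abs_self ν, le_abs_self lam,
          abs_nonneg ν, abs_nonneg lam, sq_nonneg ((m:ℝ))]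
      · nlinarith [le_abs_self ν, le_abs_self lam, abs_nonneg ν, abs_nonneg lam]
    calc |c (m + 2)| = (((m : ℝ) + 2) * ((m : ℝ) + 1)) * |c (m + 2)| / (((m : ℝ) + 2) * ((m : ℝ) + 1)) := by
          field_simp
      _ = |(m : ℝ) ^ 2 + ν * m + lam| * |c m| / (((m : ℝ) + 2) * ((m : ℝ) + 1)) := by rw [h1]
      _ ≤ q ^ 2 * (((m : ℝ) + 2) * ((m : ℝ) + 1)) * |c m| / (((m : ℝ) + 2) * ((m : ℝ) + 1)) := by
          gcongr
      _ = q ^ 2 * |c m| := by field_simp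
  set C : ℝ := (∑ m ∈ Finset.range (M + 2), |c m|) + 1 with hC
  have hCpos : 0 < C := by positivity
  have hq0 : 0 < q := lt_trans zero_lt_one hq
  refine ⟨C, hCpos, ?_⟩
  intro m
  induction m using Nat.strong_induction_on with
  | _ m ih =>
    by_cases hm : m < M + 2
    · have h1 : |c m| ≤ C := by
        have : |c m| ≤ ∑ i ∈ Finset.range (M + 2), |c i| :=
          Finset.single_le_sum (fun i _ => abs_nonneg (c i)) (Finset.mem_range.mpr hm)
        linarith
      have : (1 : ℝ) ≤ q ^ m := one_le_pow₀ hq.le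
      nlinarith
    · push_neg at hm
      obtain ⟨ℓ, rfl⟩ : ∃ ℓ, m = ℓ + 2 := ⟨m - 2, by omega⟩
      have hℓ : M ≤ ℓ := by omega
      calc |c (ℓ + 2)| ≤ q ^ 2 * |c ℓ| := hstep ℓ hℓ
        _ ≤ q ^ 2 * (C * q ^ ℓ) := by
            apply mul_le_mul_of_nonneg_left (ih ℓ (by omega)) (by positivity)
        _ = C * q ^ (ℓ + 2) := by ring


section Summability

lemma summable_master (c : ℕ → ℝ) (ν lam : ℝ)
    (hrec : ∀ m : ℕ, ((m : ℝ) + 2) * ((m : ℝ) + 1) * c (m + 2) =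
      ((m : ℝ) ^ 2 + ν * m + lam) * c m)
    (p : ℕ) (r : ℝ) (hr0 : 0 ≤ r) (hr1 : r < 1) :
    Summable (fun m : ℕ => (m : ℝ) ^ p * |c m| * r ^ m) := by
  rcases hr0.eq_or_lt with h | h
  · apply summable_of_ne_finset_zero (s := Finset.range 1)
    intro m hm
    rw [Finset.mem_range, Nat.lt_one_iff] at hm
    rw [← h, zero_pow hm]
    ring
  · have h1r : 1 < 1 / r := (one_lt_div h).mpr hr1
    set q : ℝ := Real.sqrt (1 / r) with hqdef
    have hq : 1 < q := by
      rw [hqdef]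
      nlinarith [Real.sq_sqrt (by positivity : (0:ℝ) ≤ 1/r), Real.sqrt_nonneg (1/r)]
    obtain ⟨C, hC0, hC⟩ := coeff_geom_bound c ν lam hrec q hq
    have hqr : q * r = Real.sqrt r := by
      rw [hqdef, one_div, Real.sqrt_inv, inv_mul_eq_div, Real.div_sqrt]
    have hsr : ‖Real.sqrt r‖ < 1 := by
      rw [Real.norm_eq_abs, abs_of_nonneg (Real.sqrt_nonneg r)]
      nlinarith [Real.sq_sqrt hr0, Real.sqrt_nonneg r]
    refine Summable.of_nonneg_of_le (fun m => by positivity) (fun m => ?_)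
      ((summable_pow_mul_geometric_of_norm_lt_one p hsr).mul_left C)
    have hb : |c m| * r ^ m ≤ C * Real.sqrt r ^ m := by
      calc |c m| * r ^ m ≤ C * q ^ m * r ^ m :=
            mul_le_mul_of_nonneg_right (hC m) (by positivity)
        _ = C * (q * r) ^ m := by rw [mul_pow]; ring
        _ = C * Real.sqrt r ^ m := by rw [hqr]
    calc (m : ℝ) ^ p * |c m| * r ^ m = (m : ℝ) ^ p * (|c m| * r ^ m) := by ring
      _ ≤ (m : ℝ) ^ p * (C * Real.sqrt r ^ m) :=
          mul_le_mul_of_nonneg_left hb (by positivity)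
      _ = C * ((m : ℝ) ^ p * Real.sqrt r ^ m) := by ring

lemma summable_S0 (c : ℕ → ℝ) (ν lam : ℝ)
    (hrec : ∀ m : ℕ, ((m : ℝ) + 2) * ((m : ℝ) + 1) * c (m + 2) =
      ((m : ℝ) ^ 2 + ν * m + lam) * c m)
    (s : ℝ) (hs : |s| < 1) : Summable (fun m : ℕ => c m * s ^ m) := by
  refine Summable.of_norm_bounded
    (summable_master c ν lam hrec 0 |s| (abs_nonneg s) hs) (fun m => ?_)
  rw [norm_mul, norm_pow, Real.norm_eq_abs, Real.norm_eq_abs, pow_zero, one_mul]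

lemma summable_S1 (c : ℕ → ℝ) (ν lam : ℝ)
    (hrec : ∀ m : ℕ, ((m : ℝ) + 2) * ((m : ℝ) + 1) * c (m + 2) =
      ((m : ℝ) ^ 2 + ν * m + lam) * c m)
    (s : ℝ) (hs : |s| < 1) :
    Summable (fun m : ℕ => (m : ℝ) * c m * s ^ (m - 1)) := by
  set r : ℝ := (|s| + 1) / 2 with hrdef
  have hr0 : 0 < r := by positivity
  have hr1 : r < 1 := by rw [hrdef]; linarith
  have hsr : |s| ≤ r := by rw [hrdef]; linarith [abs_nonneg s]
  refine Summable.of_norm_bounded (g :=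
    (fun m : ℕ => (1 / r) * ((m : ℝ) ^ 1 * |c m| * r ^ m)))
    ((summable_master c ν lam hrec 1 r hr0.le hr1).mul_left (1 / r)) (fun m => ?_)
  match m with
  | 0 => simp
  | (ℓ + 1) =>
    have h1 : ‖((ℓ + 1 : ℕ) : ℝ) * c (ℓ + 1) * s ^ (ℓ + 1 - 1)‖ =
        ((ℓ + 1 : ℕ) : ℝ) * |c (ℓ + 1)| * |s| ^ ℓ := by
      rw [Nat.add_sub_cancel, norm_mul, norm_mul, Real.norm_eq_abs, Real.norm_eq_abs,
        Real.norm_eq_abs, abs_pow, Nat.abs_cast]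
    rw [h1]
    have h2 : |s| ^ ℓ ≤ r ^ ℓ := pow_le_pow_left₀ (abs_nonneg s) hsr ℓ
    calc ((ℓ + 1 : ℕ) : ℝ) * |c (ℓ + 1)| * |s| ^ ℓ
        ≤ ((ℓ + 1 : ℕ) : ℝ) * |c (ℓ + 1)| * r ^ ℓ :=
          mul_le_mul_of_nonneg_left h2 (by positivity)
      _ = (1 / r) * (((ℓ + 1 : ℕ) : ℝ) ^ 1 * |c (ℓ + 1)| * r ^ (ℓ + 1)) := by
          have h3 : r ^ (ℓ + 1) = r * r ^ ℓ := by ring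
          rw [h3]; field_simp

lemma summable_S2 (c : ℕ → ℝ) (ν lam : ℝ)
    (hrec : ∀ m : ℕ, ((m : ℝ) + 2) * ((m : ℝ) + 1) * c (m + 2) =
      ((m : ℝ) ^ 2 + ν * m + lam) * c m)
    (s : ℝ) (hs : |s| < 1) :
    Summable (fun m : ℕ => (m : ℝ) * ((m - 1 : ℕ) : ℝ) * c m * s ^ (m - 2)) := by
  set r : ℝ := (|s| + 1) / 2 with hrdef
  have hr0 : 0 < r := by positivity
  have hr1 : r < 1 := by rw [hrdef]; linarith
  have hsr : |s| ≤ r := by rw [hrdef]; linarith [abs_nonneg s]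
  refine Summable.of_norm_bounded (g :=
    (fun m : ℕ => (1 / r ^ 2) * ((m : ℝ) ^ 2 * |c m| * r ^ m)))
    ((summable_master c ν lam hrec 2 r hr0.le hr1).mul_left (1 / r ^ 2)) (fun m => ?_)
  match m with
  | 0 => simp
  | 1 =>
    simp only [Nat.cast_one, Nat.sub_self, Nat.cast_zero, mul_zero, zero_mul, norm_zero]
    positivity
  | (ℓ + 2) =>
    have h1 : ‖((ℓ + 2 : ℕ) : ℝ) * ((ℓ + 2 - 1 : ℕ) : ℝ) * c (ℓ + 2) * s ^ (ℓ + 2 - 2)‖ =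
        ((ℓ + 2 : ℕ) : ℝ) * ((ℓ + 1 : ℕ) : ℝ) * |c (ℓ + 2)| * |s| ^ ℓ := by
      have he : ℓ + 2 - 1 = ℓ + 1 := rfl
      have he2 : ℓ + 2 - 2 = ℓ := rfl
      rw [he, he2, norm_mul, norm_mul, norm_mul, Real.norm_eq_abs, Real.norm_eq_abs,
        Real.norm_eq_abs, Real.norm_eq_abs, abs_pow, Nat.abs_cast, Nat.abs_cast]
    rw [h1]
    have h2 : |s| ^ ℓ ≤ r ^ ℓ := pow_le_pow_left₀ (abs_nonneg s) hsr ℓ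
    have h4 : ((ℓ + 2 : ℕ) : ℝ) * ((ℓ + 1 : ℕ) : ℝ) ≤ ((ℓ + 2 : ℕ) : ℝ) ^ 2 := by
      push_cast; nlinarith [Nat.cast_nonneg (α := ℝ) ℓ]
    calc ((ℓ + 2 : ℕ) : ℝ) * ((ℓ + 1 : ℕ) : ℝ) * |c (ℓ + 2)| * |s| ^ ℓ
        ≤ ((ℓ + 2 : ℕ) : ℝ) ^ 2 * |c (ℓ + 2)| * r ^ ℓ := by
          apply mul_le_mul (mul_le_mul_of_nonneg_right h4 (abs_nonneg _)) h2 (by positivity)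
            (by positivity)
      _ = (1 / r ^ 2) * (((ℓ + 2 : ℕ) : ℝ) ^ 2 * |c (ℓ + 2)| * r ^ (ℓ + 2)) := by
          have h5 : r ^ (ℓ + 2) = r ^ 2 * r ^ ℓ := by ring
          rw [h5]; field_simp

end Summability


section Derivatives

lemma norm_term1_le (c : ℕ → ℝ) (r y : ℝ) (hr : 0 < r) (hy : |y| ≤ r) (m : ℕ) :
    ‖(m : ℝ) * c m * y ^ (m - 1)‖ ≤ (1 / r) * ((m : ℝ) ^ 1 * |c m| * r ^ m) := by
  match m with
  | 0 => simp
  | (ℓ + 1) =>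
    have h1 : ‖((ℓ + 1 : ℕ) : ℝ) * c (ℓ + 1) * y ^ (ℓ + 1 - 1)‖ =
        ((ℓ + 1 : ℕ) : ℝ) * |c (ℓ + 1)| * |y| ^ ℓ := by
      rw [Nat.add_sub_cancel, norm_mul, norm_mul, Real.norm_eq_abs, Real.norm_eq_abs,
        Real.norm_eq_abs, abs_pow, Nat.abs_cast]
    rw [h1]
    have h2 : |y| ^ ℓ ≤ r ^ ℓ := pow_le_pow_left₀ (abs_nonneg y) hy ℓ
    calc ((ℓ + 1 : ℕ) : ℝ) * |c (ℓ + 1)| * |y| ^ ℓ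
        ≤ ((ℓ + 1 : ℕ) : ℝ) * |c (ℓ + 1)| * r ^ ℓ :=
          mul_le_mul_of_nonneg_left h2 (by positivity)
      _ = (1 / r) * (((ℓ + 1 : ℕ) : ℝ) ^ 1 * |c (ℓ + 1)| * r ^ (ℓ + 1)) := by
          have h3 : r ^ (ℓ + 1) = r * r ^ ℓ := by ring
          rw [h3]; field_simp

lemma norm_term2_le (c : ℕ → ℝ) (r y : ℝ) (hr : 0 < r) (hy : |y| ≤ r) (m : ℕ) :
    ‖(m : ℝ) * ((m - 1 : ℕ) : ℝ) * c m * y ^ (m - 2)‖ ≤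
      (1 / r ^ 2) * ((m : ℝ) ^ 2 * |c m| * r ^ m) := by
  match m with
  | 0 => simp
  | 1 =>
    simp only [Nat.cast_one, Nat.sub_self, Nat.cast_zero, mul_zero, zero_mul, norm_zero]
    positivity
  | (ℓ + 2) =>
    have h1 : ‖((ℓ + 2 : ℕ) : ℝ) * ((ℓ + 2 - 1 : ℕ) : ℝ) * c (ℓ + 2) * y ^ (ℓ + 2 - 2)‖ =
        ((ℓ + 2 : ℕ) : ℝ) * ((ℓ + 1 : ℕ) : ℝ) * |c (ℓ + 2)| * |y| ^ ℓ := by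
      have he : ℓ + 2 - 1 = ℓ + 1 := rfl
      have he2 : ℓ + 2 - 2 = ℓ := rfl
      rw [he, he2, norm_mul, norm_mul, norm_mul, Real.norm_eq_abs, Real.norm_eq_abs,
        Real.norm_eq_abs, Real.norm_eq_abs, abs_pow, Nat.abs_cast, Nat.abs_cast]
    rw [h1]
    have h2 : |y| ^ ℓ ≤ r ^ ℓ := pow_le_pow_left₀ (abs_nonneg y) hy ℓ
    have h4 : ((ℓ + 2 : ℕ) : ℝ) * ((ℓ + 1 : ℕ) : ℝ) ≤ ((ℓ + 2 : ℕ) : ℝ) ^ 2 := by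
      push_cast; nlinarith [Nat.cast_nonneg (α := ℝ) ℓ]
    calc ((ℓ + 2 : ℕ) : ℝ) * ((ℓ + 1 : ℕ) : ℝ) * |c (ℓ + 2)| * |y| ^ ℓ
        ≤ ((ℓ + 2 : ℕ) : ℝ) ^ 2 * |c (ℓ + 2)| * r ^ ℓ := by
          apply mul_le_mul (mul_le_mul_of_nonneg_right h4 (abs_nonneg _)) h2 (by positivity)
            (by positivity)
      _ = (1 / r ^ 2) * (((ℓ + 2 : ℕ) : ℝ) ^ 2 * |c (ℓ + 2)| * r ^ (ℓ + 2)) := by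
          have h5 : r ^ (ℓ + 2) = r ^ 2 * r ^ ℓ := by ring
          rw [h5]; field_simp

lemma hasDerivAt_G0 (c : ℕ → ℝ) (ν lam : ℝ)
    (hrec : ∀ m : ℕ, ((m : ℝ) + 2) * ((m : ℝ) + 1) * c (m + 2) =
      ((m : ℝ) ^ 2 + ν * m + lam) * c m)
    (s : ℝ) (hs : |s| < 1) :
    HasDerivAt (fun z => ∑' m : ℕ, c m * z ^ m)
      (∑' m : ℕ, (m : ℝ) * c m * s ^ (m - 1)) s := by
  set r : ℝ := (|s| + 1) / 2 with hrdef
  have hr0 : 0 < r := by positivity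
  have hr1 : r < 1 := by rw [hrdef]; linarith
  have hsr : |s| < r := by rw [hrdef]; linarith [abs_nonneg s]
  apply hasDerivAt_tsum_of_isPreconnected
    ((summable_master c ν lam hrec 1 r hr0.le hr1).mul_left (1 / r))
    isOpen_Ioo (convex_Ioo (-r) r).isPreconnected
    (g := fun (m : ℕ) (z : ℝ) => c m * z ^ m) (g' := fun (m : ℕ) (y : ℝ) => (m : ℝ) * c m * y ^ (m - 1))
    (y₀ := 0) (y := s)
  · intro m y _
    simpa [mul_comm, mul_assoc, mul_left_comm] using (hasDerivAt_pow m y).const_mul (c m)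
  · intro m y hy
    exact norm_term1_le c r y hr0 (abs_le.mpr ⟨(mem_Ioo.mp hy).1.le, (mem_Ioo.mp hy).2.le⟩) m
  · exact mem_Ioo.mpr ⟨by linarith, hr0⟩
  · exact summable_S0 c ν lam hrec 0 (by simp)
  · exact mem_Ioo.mpr (abs_lt.mp hsr)

lemma hasDerivAt_G1 (c : ℕ → ℝ) (ν lam : ℝ)
    (hrec : ∀ m : ℕ, ((m : ℝ) + 2) * ((m : ℝ) + 1) * c (m + 2) =
      ((m : ℝ) ^ 2 + ν * m + lam) * c m)
    (s : ℝ) (hs : |s| < 1) :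
    HasDerivAt (fun z => ∑' m : ℕ, (m : ℝ) * c m * z ^ (m - 1))
      (∑' m : ℕ, (m : ℝ) * ((m - 1 : ℕ) : ℝ) * c m * s ^ (m - 2)) s := by
  set r : ℝ := (|s| + 1) / 2 with hrdef
  have hr0 : 0 < r := by positivity
  have hr1 : r < 1 := by rw [hrdef]; linarith
  have hsr : |s| < r := by rw [hrdef]; linarith [abs_nonneg s]
  apply hasDerivAt_tsum_of_isPreconnected
    ((summable_master c ν lam hrec 2 r hr0.le hr1).mul_left (1 / r ^ 2))
    isOpen_Ioo (convex_Ioo (-r) r).isPreconnected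
    (g := fun (m : ℕ) (z : ℝ) => (m : ℝ) * c m * z ^ (m - 1))
    (g' := fun (m : ℕ) (y : ℝ) => (m : ℝ) * ((m - 1 : ℕ) : ℝ) * c m * y ^ (m - 2))
    (y₀ := 0) (y := s)
  · intro m y _
    have h := (hasDerivAt_pow (m - 1) y).const_mul ((m : ℝ) * c m)
    have he : m - 1 - 1 = m - 2 := by omega
    rw [he] at h
    convert h using 1
    · rfl
    ring
  · intro m y hy
    exact norm_term2_le c r y hr0 (abs_le.mpr ⟨(mem_Ioo.mp hy).1.le, (mem_Ioo.mp hy).2.le⟩) m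
  · exact mem_Ioo.mpr ⟨by linarith, hr0⟩
  · exact summable_S1 c ν lam hrec 0 (by simp)
  · exact mem_Ioo.mpr (abs_lt.mp hsr)

end Derivatives

lemma ode_G (c : ℕ → ℝ) (ν lam : ℝ)
    (hrec : ∀ m : ℕ, ((m : ℝ) + 2) * ((m : ℝ) + 1) * c (m + 2) =
      ((m : ℝ) ^ 2 + ν * m + lam) * c m)
    (s : ℝ) (hs : |s| < 1) :
    (1 - s ^ 2) * (∑' m : ℕ, (m : ℝ) * ((m - 1 : ℕ) : ℝ) * c m * s ^ (m - 2)) -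
      (ν + 1) * s * (∑' m : ℕ, (m : ℝ) * c m * s ^ (m - 1)) -
      lam * (∑' m : ℕ, c m * s ^ m) = 0 := by
  have hA := summable_S2 c ν lam hrec s hs
  have hB := summable_S1 c ν lam hrec s hs
  have hC := summable_S0 c ν lam hrec s hs
  set A : ℕ → ℝ := fun m => (m : ℝ) * ((m - 1 : ℕ) : ℝ) * c m * s ^ (m - 2) with hAdef
  -- pointwise identities relating exponent-shifted terms
  have e2 : ∀ m : ℕ, (m : ℝ) * ((m - 1 : ℕ) : ℝ) * c m * s ^ m = s ^ 2 * A m := by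
    intro m
    match m with
    | 0 => simp [hAdef]
    | 1 => simp [hAdef]
    | (ℓ + 2) =>
      show _ = s ^ 2 * ((((ℓ+2:ℕ)) : ℝ) * (((ℓ+2-1:ℕ)) : ℝ) * c (ℓ+2) * s ^ (ℓ+2-2))
      have he : ℓ + 2 - 1 = ℓ + 1 := rfl
      have he2 : ℓ + 2 - 2 = ℓ := rfl
      rw [he, he2]
      ring
  have e1 : ∀ m : ℕ, (m : ℝ) * c m * s ^ m = s * ((m : ℝ) * c m * s ^ (m - 1)) := by
    intro m
    match m with
    | 0 => simp
    | (ℓ + 1) =>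
      have he : ℓ + 1 - 1 = ℓ := rfl
      rw [he]
      ring
  -- summabilities of un-shifted versions
  have hA2 : Summable (fun m : ℕ => (m : ℝ) * ((m - 1 : ℕ) : ℝ) * c m * s ^ m) := by
    apply Summable.congr (hA.mul_left (s ^ 2))
    intro m
    exact (e2 m).symm
  have hB2 : Summable (fun m : ℕ => (m : ℝ) * c m * s ^ m) := by
    apply Summable.congr (hB.mul_left s)
    intro m
    exact (e1 m).symm
  -- shifting the second-derivative sum
  have hA' : Summable (fun m : ℕ => A (m + 1)) := (summable_nat_add_iff 1).2 hA
  have hshift : ∑' m : ℕ, A m = ∑' m : ℕ, A (m + 2) := by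
    rw [hA.tsum_eq_zero_add, hA'.tsum_eq_zero_add]
    have h0 : A 0 = 0 := by simp [hAdef]
    have h1 : A 1 = 0 := by simp [hAdef]
    have h2 : ∀ m : ℕ, A (m + 1 + 1) = A (m + 2) := fun m => rfl
    rw [h0, h1]
    simp only [h2, zero_add]
  -- the recurrence under the shifted sum
  have hkey : ∀ m : ℕ, A (m + 2) =
      (m : ℝ) * ((m - 1 : ℕ) : ℝ) * c m * s ^ m + (ν + 1) * ((m : ℝ) * c m * s ^ m) +
        lam * (c m * s ^ m) := by
    intro m
    have hr := hrec m
    have hnat : (m : ℝ) * ((m - 1 : ℕ) : ℝ) + (ν + 1) * (m : ℝ) + lam =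
        (m : ℝ) ^ 2 + ν * m + lam := by
      match m with
      | 0 => simp
      | (ℓ + 1) =>
        have he : ℓ + 1 - 1 = ℓ := rfl
        rw [he]
        push_cast
        ring
    have hAm2 : A (m + 2) = ((m + 2 : ℕ) : ℝ) * ((m + 1 : ℕ) : ℝ) * c (m + 2) * s ^ m := by
      have he : m + 2 - 1 = m + 1 := rfl
      have he2 : m + 2 - 2 = m := rfl
      simp only [hAdef, he, he2]
    rw [hAm2]
    have : ((m + 2 : ℕ) : ℝ) * ((m + 1 : ℕ) : ℝ) * c (m + 2) =
        ((m : ℝ) ^ 2 + ν * m + lam) * c m := by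
      push_cast
      rw [← hr]
    rw [this, ← hnat]
    ring
  have hsum2 : ∑' m : ℕ, A (m + 2) =
      s ^ 2 * (∑' m, A m) + (ν + 1) * s * (∑' m : ℕ, (m : ℝ) * c m * s ^ (m - 1)) +
        lam * (∑' m : ℕ, c m * s ^ m) := by
    rw [tsum_congr hkey, Summable.tsum_add (hA2.add (hB2.mul_left (ν + 1))) (hC.mul_left lam),
      Summable.tsum_add hA2 (hB2.mul_left (ν + 1)), tsum_mul_left, tsum_mul_left]
    rw [tsum_congr e2, tsum_congr e1, tsum_mul_left, tsum_mul_left]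
    ring
  have := hshift.trans hsum2
  nlinarith [this]

section GammaCoeffs

/-- Coefficients of the hypergeometric series. -/
def dcoef (a b cc : ℝ) (j : ℕ) : ℝ :=
  Real.Gamma (a + j) * Real.Gamma (b + j) * Real.Gamma cc /
    (Real.Gamma a * Real.Gamma b * Real.Gamma (cc + j) * (Nat.factorial j : ℝ))

lemma dcoef_zero (a b cc : ℝ) (ha : 0 < a) (hb : 0 < b) (hcc : 0 < cc) :
    dcoef a b cc 0 = 1 := by
  have h1 := Real.Gamma_pos_of_pos ha
  have h2 := Real.Gamma_pos_of_pos hb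
  have h3 := Real.Gamma_pos_of_pos hcc
  simp only [dcoef, Nat.cast_zero, add_zero, Nat.factorial_zero, Nat.cast_one, mul_one]
  field_simp

lemma dcoef_succ (a b cc : ℝ) (ha : 0 < a) (hb : 0 < b) (hcc : 0 < cc) (j : ℕ) :
    dcoef a b cc (j + 1) =
      dcoef a b cc j * ((a + j) * (b + j)) / ((cc + j) * ((j : ℝ) + 1)) := by
  have haj : (0:ℝ) < a + j := by positivity
  have hbj : (0:ℝ) < b + j := by positivity
  have hccj : (0:ℝ) < cc + j := by positivity
  have e1 : a + ((j + 1 : ℕ) : ℝ) = (a + j) + 1 := by push_cast; ring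
  have e2 : b + ((j + 1 : ℕ) : ℝ) = (b + j) + 1 := by push_cast; ring
  have e3 : cc + ((j + 1 : ℕ) : ℝ) = (cc + j) + 1 := by push_cast; ring
  have hfact : ((Nat.factorial (j + 1) : ℕ) : ℝ) = ((j : ℝ) + 1) * (Nat.factorial j : ℝ) := by
    rw [Nat.factorial_succ]; push_cast; ring
  rw [dcoef, dcoef, e1, e2, e3, Real.Gamma_add_one haj.ne', Real.Gamma_add_one hbj.ne',
    Real.Gamma_add_one hccj.ne', hfact]
  have h1 := Real.Gamma_pos_of_pos ha
  have h2 := Real.Gamma_pos_of_pos hb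
  have h3 := Real.Gamma_pos_of_pos (by positivity : (0:ℝ) < cc + j)
  have h4 : (0:ℝ) < (Nat.factorial j : ℝ) := by positivity
  field_simp

/-- Merged even/odd coefficient sequence. -/
def ccoef (a b kk : ℝ) (m : ℕ) : ℝ :=
  if m % 2 = 0 then dcoef a b (1/2) (m / 2)
  else kk * dcoef (a + 1/2) (b + 1/2) (3/2) (m / 2)

lemma ccoef_even (a b kk : ℝ) (j : ℕ) : ccoef a b kk (2 * j) = dcoef a b (1/2) j := by
  simp [ccoef, Nat.mul_mod_right, Nat.mul_div_cancel_left j (by norm_num : 0 < 2)]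

lemma ccoef_odd (a b kk : ℝ) (j : ℕ) :
    ccoef a b kk (2 * j + 1) = kk * dcoef (a + 1/2) (b + 1/2) (3/2) j := by
  have h1 : (2 * j + 1) % 2 = 1 := by omega
  have h2 : (2 * j + 1) / 2 = j := by omega
  simp [ccoef, h1, h2]

lemma ccoef_rec (a b kk : ℝ) (ha : 0 < a) (hb : 0 < b) :
    ∀ m : ℕ, ((m : ℝ) + 2) * ((m : ℝ) + 1) * ccoef a b kk (m + 2) =
      ((m : ℝ) ^ 2 + (2 * (a + b)) * m + 4 * (a * b)) * ccoef a b kk m := by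
  intro m
  rcases Nat.even_or_odd m with ⟨j, hj⟩ | ⟨j, hj⟩
  · subst hj
    have hm2 : j + j + 2 = 2 * (j + 1) := by ring
    have hm : j + j = 2 * j := by ring
    rw [hm2, hm, ccoef_even, ccoef_even,
      dcoef_succ a b (1/2) ha hb (by norm_num) j]
    have hd : (0:ℝ) < (1/2 + (j:ℝ)) * ((j : ℝ) + 1) := by positivity
    field_simp
    push_cast
    ring
  · subst hj
    have hm2 : 2 * j + 1 + 2 = 2 * (j + 1) + 1 := by ring
    rw [hm2, ccoef_odd, ccoef_odd,
      dcoef_succ (a + 1/2) (b + 1/2) (3/2) (by linarith) (by linarith) (by norm_num) j]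
    have hd : (0:ℝ) < (3/2 + (j:ℝ)) * ((j : ℝ) + 1) := by positivity
    field_simp
    push_cast
    ring

end GammaCoeffs

section Matching

lemma summable_d_even (a b kk : ℝ) (ha : 0 < a) (hb : 0 < b) (y : ℝ)
    (hy0 : 0 ≤ y) (hy1 : y < 1) :
    Summable (fun j : ℕ => dcoef a b (1/2) j * y ^ j) := by
  have hsy : |Real.sqrt y| < 1 := by
    rw [abs_of_nonneg (Real.sqrt_nonneg y)]
    nlinarith [Real.sq_sqrt hy0, Real.sqrt_nonneg y]
  have h0 := summable_S0 (ccoef a b kk) (2 * (a + b)) (4 * (a * b))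
    (ccoef_rec a b kk ha hb) (Real.sqrt y) hsy
  have hinj : Function.Injective (fun j : ℕ => 2 * j) := fun x y h => by dsimp at h; omega
  have h1 := h0.comp_injective hinj
  apply h1.congr
  intro j
  show ccoef a b kk (2 * j) * Real.sqrt y ^ (2 * j) = dcoef a b (1/2) j * y ^ j
  rw [ccoef_even, pow_mul, Real.sq_sqrt hy0]

lemma summable_d_odd (a b : ℝ) (ha : 0 < a) (hb : 0 < b) (y : ℝ)
    (hy0 : 0 ≤ y) (hy1 : y < 1) :
    Summable (fun j : ℕ => dcoef (a + 1/2) (b + 1/2) (3/2) j * y ^ j) := by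
  rcases hy0.eq_or_lt with h | h
  · apply summable_of_ne_finset_zero (s := Finset.range 1)
    intro j hj
    rw [Finset.mem_range, Nat.lt_one_iff] at hj
    rw [← h, zero_pow hj, mul_zero]
  · have hsy : |Real.sqrt y| < 1 := by
      rw [abs_of_nonneg (Real.sqrt_nonneg y)]
      nlinarith [Real.sq_sqrt hy0, Real.sqrt_nonneg y]
    have hsy0 : 0 < Real.sqrt y := Real.sqrt_pos.mpr h
    have h0 := summable_S0 (ccoef a b 1) (2 * (a + b)) (4 * (a * b))
      (ccoef_rec a b 1 ha hb) (Real.sqrt y) hsy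
    have hinj : Function.Injective (fun j : ℕ => 2 * j + 1) := fun x y h => by dsimp at h; omega
    have h1 := (h0.comp_injective hinj).mul_left (1 / Real.sqrt y)
    apply h1.congr
    intro j
    show (1 / Real.sqrt y) * (ccoef a b 1 (2 * j + 1) * Real.sqrt y ^ (2 * j + 1)) =
      dcoef (a + 1/2) (b + 1/2) (3/2) j * y ^ j
    have hsp : Real.sqrt y ^ (2 * j + 1) = y ^ j * Real.sqrt y := by
      rw [pow_succ, pow_mul, Real.sq_sqrt hy0]
    rw [ccoef_odd, hsp]
    field_simp

set_option maxHeartbeats 1000000 in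
lemma hypergeom_eq_tsum (a b cc y : ℝ) (ha : 0 < a) (hb : 0 < b) (hcc : 0 < cc)
    (hsum : Summable (fun j : ℕ => dcoef a b cc j * y ^ j)) :
    hypergeom a b cc y = ∑' j : ℕ, dcoef a b cc j * y ^ j := by
  rw [hsum.tsum_eq_zero_add, pow_zero, mul_one, dcoef_zero a b cc ha hb hcc, hypergeom]
  congr 1
  rw [← tsum_mul_left]
  apply tsum_congr
  intro n
  have h1 := Real.Gamma_pos_of_pos ha
  have h2 := Real.Gamma_pos_of_pos hb
  have h3 := Real.Gamma_pos_of_pos hcc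
  have h4 : (0:ℝ) < Real.Gamma (cc + ((n + 1 : ℕ) : ℝ)) :=
    Real.Gamma_pos_of_pos (by positivity)
  have h5 : (0:ℝ) < ((Nat.factorial (n + 1) : ℕ) : ℝ) := by positivity
  rw [dcoef]
  field_simp

set_option maxHeartbeats 2000000 in
lemma g_matching (a b kk : ℝ) (ha : 0 < a) (hb : 0 < b) (s : ℝ)
    (hs0 : 0 ≤ s) (hs1 : s < 1) :
    ∑' m : ℕ, ccoef a b kk m * s ^ m =
      (∑' j : ℕ, dcoef a b (1/2) j * (s ^ 2) ^ j) +
        kk * s * (∑' j : ℕ, dcoef (a + 1/2) (b + 1/2) (3/2) j * (s ^ 2) ^ j) := by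
  have hy0 : 0 ≤ s ^ 2 := by positivity
  have hy1 : s ^ 2 < 1 := by nlinarith
  have hde := summable_d_even a b kk ha hb (s ^ 2) hy0 hy1
  have hdo := summable_d_odd a b ha hb (s ^ 2) hy0 hy1
  have he : Summable (fun j : ℕ => ccoef a b kk (2 * j) * s ^ (2 * j)) := by
    apply hde.congr
    intro j
    rw [ccoef_even, pow_mul]
  have ho : Summable (fun j : ℕ => ccoef a b kk (2 * j + 1) * s ^ (2 * j + 1)) := by
    apply (hdo.mul_left (kk * s)).congr
    intro j
    have hsp : s ^ (2 * j + 1) = (s ^ 2) ^ j * s := by rw [pow_succ, pow_mul]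
    rw [ccoef_odd, hsp]
    ring
  rw [← tsum_even_add_odd he ho]
  congr 1
  · apply tsum_congr
    intro j
    rw [ccoef_even, pow_mul]
  · rw [← tsum_mul_left]
    apply tsum_congr
    intro j
    have hsp : s ^ (2 * j + 1) = (s ^ 2) ^ j * s := by rw [pow_succ, pow_mul]
    rw [ccoef_odd, hsp]
    ring

end Matching



section FinalPieces

lemma hypergeom_zero (a b cc : ℝ) : hypergeom a b cc 0 = 1 := by
  have h : ∀ n : ℕ, Real.Gamma (a + (n + 1 : ℕ)) * Real.Gamma (b + (n + 1 : ℕ)) /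
      Real.Gamma (cc + (n + 1 : ℕ)) * (0:ℝ) ^ (n + 1) / (Nat.factorial (n + 1) : ℝ) = 0 := by
    intro n
    rw [zero_pow (Nat.succ_ne_zero n)]
    ring
  rw [hypergeom, tsum_congr h, tsum_zero]
  ring

lemma ccoef_zero' (a b kk : ℝ) (ha : 0 < a) (hb : 0 < b) : ccoef a b kk 0 = 1 := by
  have h := ccoef_even a b kk 0
  rw [mul_zero] at h
  rw [h, dcoef_zero a b (1/2) ha hb (by norm_num)]

end FinalPieces

set_option maxHeartbeats 1000000 in
/-- **`f(θ) = w(sin²θ)` solves the ODE (3.10) with `f(0) = 1`** (from (3.11)). -/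
theorem hypergeom_combination_solves_ode (N : ℕ) (hN : 3 ≤ N) (β : ℝ)
    (hβ2 : 2 ≤ β) (hβN : β < N) (k : ℝ) (w f : ℝ → ℝ)
    (hw : ∀ y ∈ Ico (0 : ℝ) 1,
      w y = hypergeom ((N + β) / 4 - 1) ((N - β) / 4) (1 / 2) y +
        k * Real.sqrt y * hypergeom ((N + β) / 4 - 1 / 2) ((N - β) / 4 + 1 / 2) (3 / 2) y)
    (hf : ∀ θ ∈ Ico 0 (π / 2), f θ = w (Real.sin θ ^ 2)) :
    f 0 = 1 ∧
      ∀ θ ∈ Ioo 0 (π / 2),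
        deriv (deriv f) θ - (N - 2) * Real.tan θ * deriv f θ -
          ((N - 2) ^ 2 / 4 - (β - 2) ^ 2 / 4) * f θ = 0 := by
  have hN3 : (3 : ℝ) ≤ (N : ℝ) := by exact_mod_cast hN
  set a : ℝ := ((N : ℝ) + β) / 4 - 1 with ha_def
  set b : ℝ := ((N : ℝ) - β) / 4 with hb_def
  have ha : 0 < a := by rw [ha_def]; linarith
  have hb : 0 < b := by rw [hb_def]; linarith
  set ν : ℝ := 2 * (a + b) with hν_def
  set lam : ℝ := 4 * (a * b) with hlam_def
  have hν : ν = (N : ℝ) - 2 := by rw [hν_def, ha_def, hb_def]; ring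
  have hlam : ((N : ℝ) - 2) ^ 2 / 4 - (β - 2) ^ 2 / 4 = lam := by
    rw [hlam_def, ha_def, hb_def]; ring
  set c : ℕ → ℝ := ccoef a b k with hc_def
  have hrec := ccoef_rec a b k ha hb
  -- key pointwise identity on [0, π/2)
  have key : ∀ θ' ∈ Ico (0 : ℝ) (π / 2), f θ' = ∑' m : ℕ, c m * Real.sin θ' ^ m := by
    intro θ' hθ'
    obtain ⟨hθ0, hθ1⟩ := hθ'
    have hsin0 : 0 ≤ Real.sin θ' := by
      apply Real.sin_nonneg_of_nonneg_of_le_pi hθ0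
      linarith [Real.pi_pos]
    have hcos : 0 < Real.cos θ' :=
      Real.cos_pos_of_mem_Ioo ⟨by linarith [Real.pi_pos], hθ1⟩
    have hsin1 : Real.sin θ' < 1 := by
      nlinarith [Real.sin_sq_add_cos_sq θ']
    have hy0 : (0:ℝ) ≤ Real.sin θ' ^ 2 := by positivity
    have hy1 : Real.sin θ' ^ 2 < 1 := by nlinarith
    rw [hf θ' ⟨hθ0, hθ1⟩, hw (Real.sin θ' ^ 2) ⟨hy0, hy1⟩]
    have e1 : ((N : ℝ) + β) / 4 - 1 / 2 = a + 1 / 2 := by rw [ha_def]; ring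
    rw [e1, Real.sqrt_sq hsin0,
      hypergeom_eq_tsum a b (1/2) (Real.sin θ' ^ 2) ha hb (by norm_num)
        (summable_d_even a b k ha hb (Real.sin θ' ^ 2) hy0 hy1),
      hypergeom_eq_tsum (a + 1/2) (b + 1/2) (3/2) (Real.sin θ' ^ 2)
        (by linarith) (by linarith) (by norm_num)
        (summable_d_odd a b ha hb (Real.sin θ' ^ 2) hy0 hy1)]
    exact (g_matching a b k ha hb (Real.sin θ') hsin0 hsin1).symm
  constructor
  · -- f 0 = 1
    have h0 : f 0 = ∑' m : ℕ, c m * Real.sin 0 ^ m :=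
      key 0 ⟨le_refl 0, by linarith [Real.pi_pos]⟩
    rw [h0, Real.sin_zero]
    rw [tsum_eq_single 0 (fun m hm => by rw [zero_pow hm, mul_zero])]
    rw [pow_zero, mul_one, hc_def, ccoef_zero' a b k ha hb]
  · -- the ODE
    intro θ hθ
    obtain ⟨hθ0, hθ1⟩ := hθ
    have hsin0 : 0 ≤ Real.sin θ := by
      apply Real.sin_nonneg_of_nonneg_of_le_pi hθ0.le
      linarith [Real.pi_pos]
    have hcos : 0 < Real.cos θ :=
      Real.cos_pos_of_mem_Ioo ⟨by linarith [Real.pi_pos], hθ1⟩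
    have hsin1 : Real.sin θ < 1 := by nlinarith [Real.sin_sq_add_cos_sq θ]
    have hsabs : |Real.sin θ| < 1 := by rw [abs_of_nonneg hsin0]; exact hsin1
    set s : ℝ := Real.sin θ with hs_def
    set T0 : ℝ → ℝ := fun z => ∑' m : ℕ, c m * z ^ m with hT0_def
    set T1 : ℝ → ℝ := fun z => ∑' m : ℕ, (m : ℝ) * c m * z ^ (m - 1) with hT1_def
    set T2 : ℝ → ℝ := fun z => ∑' m : ℕ, (m : ℝ) * ((m - 1 : ℕ) : ℝ) * c m * z ^ (m - 2)
      with hT2_def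
    -- first derivative of f on Ioo
    have hder1 : ∀ θ' ∈ Ioo (0:ℝ) (π / 2), HasDerivAt f (T1 (Real.sin θ') * Real.cos θ') θ' := by
      intro θ' hθ'
      have hsin0' : 0 ≤ Real.sin θ' := by
        apply Real.sin_nonneg_of_nonneg_of_le_pi hθ'.1.le
        linarith [Real.pi_pos, hθ'.2]
      have hcos' : 0 < Real.cos θ' :=
        Real.cos_pos_of_mem_Ioo ⟨by linarith [Real.pi_pos, hθ'.1], hθ'.2⟩
      have habs' : |Real.sin θ'| < 1 := by
        rw [abs_of_nonneg hsin0']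
        nlinarith [Real.sin_sq_add_cos_sq θ']
      have hD := (hasDerivAt_G0 c ν lam hrec (Real.sin θ') habs').comp θ'
        (Real.hasDerivAt_sin θ')
      have hev : f =ᶠ[nhds θ'] (fun t => T0 (Real.sin t)) := by
        filter_upwards [isOpen_Ioo.mem_nhds hθ'] with t ht
        exact key t ⟨ht.1.le, ht.2⟩
      exact (hD.congr_of_eventuallyEq hev)
    -- second derivative
    have hder2 : HasDerivAt (fun t => T1 (Real.sin t) * Real.cos t)
        (T2 s * Real.cos θ * Real.cos θ + T1 s * (-Real.sin θ)) θ := by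
      have hD2 := (hasDerivAt_G1 c ν lam hrec s hsabs).comp θ (Real.hasDerivAt_sin θ)
      exact hD2.mul (Real.hasDerivAt_cos θ)
    have hdf : deriv f θ = T1 s * Real.cos θ := (hder1 θ ⟨hθ0, hθ1⟩).deriv
    have hdfev : deriv f =ᶠ[nhds θ] (fun t => T1 (Real.sin t) * Real.cos t) := by
      filter_upwards [isOpen_Ioo.mem_nhds ⟨hθ0, hθ1⟩] with t ht
      exact (hder1 t ht).deriv
    have hddf : deriv (deriv f) θ =
        T2 s * Real.cos θ * Real.cos θ + T1 s * (-Real.sin θ) := by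
      rw [hdfev.deriv_eq]
      exact hder2.deriv
    have hfθ : f θ = T0 s := key θ ⟨hθ0.le, hθ1⟩
    have hode := ode_G c ν lam hrec s hsabs
    rw [hddf, hdf, hfθ, Real.tan_eq_sin_div_cos, hlam, ← hs_def]
    have hode' : (1 - s ^ 2) * T2 s - (ν + 1) * s * T1 s - lam * T0 s = 0 := hode
    rw [hν] at hode'
    have hcos2 : Real.cos θ * Real.cos θ = 1 - s ^ 2 := by
      nlinarith [Real.sin_sq_add_cos_sq θ, hs_def]
    have hne : Real.cos θ ≠ 0 := hcos.ne'
    have ht : ((N : ℝ) - 2) * (s / Real.cos θ) * (T1 s * Real.cos θ) =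
        ((N : ℝ) - 2) * s * T1 s := by
      field_simp
    have hc2 : T2 s * Real.cos θ * Real.cos θ = T2 s * (1 - s ^ 2) := by
      rw [mul_assoc, hcos2]
    rw [ht, hc2]
    linear_combination hode'
end
end

section
/- Let N ≥ 3, let Φ be a Finsler norm on ℝ^N with dual norm Φ⁰, let Δ_Φ φ = div( Φ(∇φ) ∇Φ(∇φ) ), and let c ∈ ℝ. Let U ⊆ ℝ^N be open with 0 ∉ U, and let φ : U → (0,∞) be a C² function satisfying Δ_Φ φ + c φ/(Φ⁰)² = 0 on U and ∇φ ≠ 0 on U. Define the vector field F : U × ℝ → ℝ^{N+1} by F(z,h) = ( (2h/φ(z)) Φ(∇φ(z)) ∇Φ(∇φ(z)), (h²/φ(z)²) Φ(∇φ(z))² + c h²/Φ⁰(z)² ). Then F is divergence free: the sum over all N+1 coordinates of the corresponding partial derivatives of F vanishes at every point of U × ℝ. -/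
open Real MeasureTheory Filter Set

noncomputable section

/-- Divergence of a vector field on `ℝ^n`. -/
def divE {n : ℕ} (V : EuclideanSpace ℝ (Fin n) → EuclideanSpace ℝ (Fin n))
    (z : EuclideanSpace ℝ (Fin n)) : ℝ :=
  ∑ i, fderiv ℝ V z (EuclideanSpace.single i 1) i

/-- Finsler Laplacian `Δ_Φ φ = div (Φ(∇φ) ∇Φ(∇φ))` on `ℝ^n`. -/
def finslerLapE {n : ℕ} (Φ φ : EuclideanSpace ℝ (Fin n) → ℝ)
    (z : EuclideanSpace ℝ (Fin n)) : ℝ :=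
  divE (fun w => Φ (gradient φ w) • gradient Φ (gradient φ w)) z

namespace FinslerAux

open Topology

variable {n : ℕ} {Φ : EuclideanSpace ℝ (Fin n) → ℝ}

lemma zero_eq (hΦ : IsFinslerNorm Φ) : Φ 0 = 0 := by
  have := hΦ.homog 0 0
  simpa using this

lemma pos_of_ne (hΦ : IsFinslerNorm Φ) {ξ : EuclideanSpace ℝ (Fin n)} (h : ξ ≠ 0) : 0 < Φ ξ := by
  obtain ⟨γ₁, γ₂, hγ₁, _, hb⟩ := hΦ.bounds
  have h1 := (hb ξ).1
  have hn : 0 < ‖ξ‖ := norm_pos_iff.mpr h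
  nlinarith

lemma normalized_mem (hΦ : IsFinslerNorm Φ) {ξ : EuclideanSpace ℝ (Fin n)} (h : ξ ≠ 0) :
    Φ ((Φ ξ)⁻¹ • ξ) = 1 := by
  rw [hΦ.homog, abs_of_pos (inv_pos.2 (pos_of_ne hΦ h))]
  exact inv_mul_cancel₀ (ne_of_gt (pos_of_ne hΦ h))

lemma cont (hΦ : IsFinslerNorm Φ) : Continuous Φ := by
  rw [continuous_iff_continuousAt]
  intro x
  by_cases hx : x = 0
  · subst hx
    obtain ⟨γ₁, γ₂, hγ₁, _, hb⟩ := hΦ.bounds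
    have h1 : Tendsto (fun ξ : EuclideanSpace ℝ (Fin n) => γ₂ * ‖ξ‖) (𝓝 0) (𝓝 0) := by
      have h0 : Continuous (fun ξ : EuclideanSpace ℝ (Fin n) => γ₂ * ‖ξ‖) :=
        continuous_const.mul continuous_norm
      simpa using h0.tendsto 0
    have h2 : Tendsto Φ (𝓝 0) (𝓝 0) :=
      squeeze_zero (fun ξ => hΦ.nonneg ξ) (fun ξ => (hb ξ).2) h1
    rw [ContinuousAt, zero_eq hΦ]
    exact h2
  · exact hΦ.contDiff.continuousOn.continuousAt ((isOpen_compl_singleton).mem_nhds hx)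

lemma sphere_compact (hΦ : IsFinslerNorm Φ) : IsCompact {ξ : EuclideanSpace ℝ (Fin n) | Φ ξ = 1} := by
  obtain ⟨γ₁, γ₂, hγ₁, _, hb⟩ := hΦ.bounds
  apply (isCompact_closedBall (0 : EuclideanSpace ℝ (Fin n)) γ₁⁻¹).of_isClosed_subset
  · exact isClosed_eq (cont hΦ) continuous_const
  · intro ξ hξ
    rw [mem_closedBall_zero_iff]
    have h1 := (hb ξ).1
    rw [hξ] at h1
    calc ‖ξ‖ = γ₁⁻¹ * (γ₁ * ‖ξ‖) := by
          rw [← mul_assoc, inv_mul_cancel₀ (ne_of_gt hγ₁), one_mul]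
    _ ≤ γ₁⁻¹ * 1 := mul_le_mul_of_nonneg_left h1 (le_of_lt (inv_pos.2 hγ₁))
    _ = γ₁⁻¹ := mul_one _

lemma dual_exists_max (hΦ : IsFinslerNorm Φ) (x : EuclideanSpace ℝ (Fin n))
    (ξref : EuclideanSpace ℝ (Fin n)) (href : ξref ≠ 0) :
    ∃ ξ₀, Φ ξ₀ = 1 ∧ dualNorm Φ x = (inner ℝ ξ₀ x : ℝ) ∧
      ∀ η, Φ η = 1 → (inner ℝ η x : ℝ) ≤ (inner ℝ ξ₀ x : ℝ) := by
  set S : Set (EuclideanSpace ℝ (Fin n)) := {ξ | Φ ξ = 1} with hS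
  have hSne : S.Nonempty := ⟨(Φ ξref)⁻¹ • ξref, normalized_mem hΦ href⟩
  have hcont : ContinuousOn (fun ξ : EuclideanSpace ℝ (Fin n) => (inner ℝ ξ x : ℝ)) S :=
    (continuous_id.inner continuous_const).continuousOn
  obtain ⟨ξ₀, hξ₀S, hmax⟩ := (sphere_compact hΦ).exists_isMaxOn hSne hcont
  refine ⟨ξ₀, hξ₀S, ?_, fun η hη => hmax hη⟩
  have himg : ((fun ξ => (inner ℝ ξ x : ℝ) / Φ ξ) '' {ξ : EuclideanSpace ℝ (Fin n) | ξ ≠ 0})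
      = (fun ξ => (inner ℝ ξ x : ℝ)) '' S := by
    ext r
    constructor
    · rintro ⟨ξ, hξ, rfl⟩
      refine ⟨(Φ ξ)⁻¹ • ξ, normalized_mem hΦ hξ, ?_⟩
      show (inner ℝ ((Φ ξ)⁻¹ • ξ) x : ℝ) = (inner ℝ ξ x : ℝ) / Φ ξ
      rw [real_inner_smul_left, div_eq_inv_mul]
    · rintro ⟨ξ, hξ, rfl⟩
      have hξ1 : Φ ξ = 1 := hξ
      have hξ0 : ξ ≠ 0 := by
        intro h0; rw [h0, zero_eq hΦ] at hξ1; norm_num at hξ1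
      refine ⟨ξ, hξ0, ?_⟩
      show (inner ℝ ξ x : ℝ) / Φ ξ = (inner ℝ ξ x : ℝ)
      rw [hξ1, div_one]
  rw [dualNorm, himg]
  exact IsGreatest.csSup_eq ⟨⟨ξ₀, hξ₀S, rfl⟩, by rintro r ⟨η, hη, rfl⟩; exact hmax hη⟩

lemma self_inner_pos (hΦ : IsFinslerNorm Φ) {x : EuclideanSpace ℝ (Fin n)} (hx : x ≠ 0) :
    0 < (inner ℝ ((Φ x)⁻¹ • x) x : ℝ) := by
  rw [real_inner_smul_left, real_inner_self_eq_norm_sq]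
  have := pos_of_ne hΦ hx
  have hn : 0 < ‖x‖ := norm_pos_iff.mpr hx
  positivity

lemma dual_pos (hΦ : IsFinslerNorm Φ) {x : EuclideanSpace ℝ (Fin n)} (hx : x ≠ 0) :
    0 < dualNorm Φ x := by
  obtain ⟨ξ₀, hξ₀, heq, hmax⟩ := dual_exists_max hΦ x x hx
  have h1 := hmax _ (normalized_mem hΦ hx)
  have h2 := self_inner_pos hΦ hx
  rw [heq]; linarith

lemma dual_max_unique (hΦ : IsFinslerNorm Φ) {x : EuclideanSpace ℝ (Fin n)} (hx : x ≠ 0)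
    {ξ₁ ξ₂ : EuclideanSpace ℝ (Fin n)} (h1 : Φ ξ₁ = 1) (h2 : Φ ξ₂ = 1)
    (hm1 : ∀ η, Φ η = 1 → (inner ℝ η x : ℝ) ≤ (inner ℝ ξ₁ x : ℝ))
    (he : (inner ℝ ξ₁ x : ℝ) = (inner ℝ ξ₂ x : ℝ)) : ξ₁ = ξ₂ := by
  by_contra hne
  have hdpos : (0 : ℝ) < inner ℝ ξ₁ x := by
    have := hm1 _ (normalized_mem hΦ hx)
    have := self_inner_pos hΦ hx
    linarith
  have hK1 : ξ₁ ∈ {ξ : EuclideanSpace ℝ (Fin n) | Φ ξ ≤ 1} := le_of_eq h1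
  have hK2 : ξ₂ ∈ {ξ : EuclideanSpace ℝ (Fin n) | Φ ξ ≤ 1} := le_of_eq h2
  have hmint : (1/2 : ℝ) • ξ₁ + (1/2 : ℝ) • ξ₂ ∈ interior {ξ : EuclideanSpace ℝ (Fin n) | Φ ξ ≤ 1} :=
    hΦ.strictConvex hK1 hK2 hne (by norm_num) (by norm_num) (by norm_num)
  set m := (1/2 : ℝ) • ξ₁ + (1/2 : ℝ) • ξ₂ with hm
  have hminner : (inner ℝ m x : ℝ) = (inner ℝ ξ₁ x : ℝ) := by
    rw [hm]
    rw [inner_add_left, real_inner_smul_left, real_inner_smul_left, ← he]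
    ring
  have hm0 : m ≠ 0 := by
    intro h0; rw [h0, inner_zero_left] at hminner; linarith
  have hmpos := pos_of_ne hΦ hm0
  obtain ⟨ε, hεpos, hball⟩ := Metric.mem_nhds_iff.1 (mem_interior_iff_mem_nhds.1 hmint)
  have hnm : 0 < ‖m‖ := norm_pos_iff.mpr hm0
  set t := ε / (2 * ‖m‖) with ht
  have htpos : 0 < t := by positivity
  have hmem2 : (1 + t) • m ∈ {ξ : EuclideanSpace ℝ (Fin n) | Φ ξ ≤ 1} := by
    apply hball
    rw [Metric.mem_ball, dist_eq_norm]
    have hsm : (1 + t) • m - m = t • m := by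
      rw [add_smul, one_smul]; abel
    rw [hsm, norm_smul, Real.norm_eq_abs, abs_of_pos htpos, ht]
    rw [div_mul_eq_mul_div, mul_comm]
    rw [div_lt_iff₀ (by positivity)]
    nlinarith
  have hΦscaled : Φ ((1 + t) • m) = (1 + t) * Φ m := by
    rw [hΦ.homog, abs_of_pos (by linarith)]
  have hmem2' : (1 + t) * Φ m ≤ 1 := by rw [← hΦscaled]; exact hmem2
  have hlt : Φ m < 1 := by nlinarith
  have hcontra := hm1 _ (normalized_mem hΦ hm0)
  rw [real_inner_smul_left, hminner] at hcontra
  have hinv : 1 < (Φ m)⁻¹ := (one_lt_inv₀ hmpos).mpr hlt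
  nlinarith

lemma dual_differentiableAt (hΦ : IsFinslerNorm Φ) {z : EuclideanSpace ℝ (Fin n)} (hz : z ≠ 0) :
    DifferentiableAt ℝ (dualNorm Φ) z := by
  obtain ⟨γ₁, γ₂, hγ₁, _, hb⟩ := hΦ.bounds
  obtain ⟨ξ₀, hξ₀, heq0, hmax0⟩ := dual_exists_max hΦ z z hz
  set R := γ₁⁻¹ with hR
  have hRpos : 0 < R := inv_pos.2 hγ₁
  have hnormS : ∀ η : EuclideanSpace ℝ (Fin n), Φ η = 1 → ‖η‖ ≤ R := by
    intro η hη
    have h1 := (hb η).1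
    rw [hη] at h1
    calc ‖η‖ = γ₁⁻¹ * (γ₁ * ‖η‖) := by field_simp
    _ ≤ γ₁⁻¹ * 1 := mul_le_mul_of_nonneg_left h1 (le_of_lt (inv_pos.2 hγ₁))
    _ = R := by rw [mul_one, hR]
  apply HasFDerivAt.differentiableAt (f' := innerSL ℝ ξ₀)
  rw [hasFDerivAt_iff_isLittleO_nhds_zero, Asymptotics.isLittleO_iff]
  intro ε hε
  set d : ℝ := inner ℝ ξ₀ z with hd
  -- key closeness property
  have hkey : ∃ δ > 0, ∀ η, Φ η = 1 → d - 2 * R * δ < (inner ℝ η z : ℝ) → ‖η - ξ₀‖ < ε := by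
    by_cases hT : ∃ η, Φ η = 1 ∧ ε ≤ ‖η - ξ₀‖
    · set T : Set (EuclideanSpace ℝ (Fin n)) := {η | Φ η = 1 ∧ ε ≤ ‖η - ξ₀‖} with hTdef
      have hTc : IsCompact T := by
        apply (sphere_compact hΦ).of_isClosed_subset
        · apply IsClosed.inter (isClosed_eq (cont hΦ) continuous_const)
          have : Continuous (fun η : EuclideanSpace ℝ (Fin n) => ‖η - ξ₀‖) :=
            (continuous_id.sub continuous_const).norm
          exact isClosed_le continuous_const this
        · intro η hη; exact hη.1
      obtain ⟨η₁, hη₁⟩ := hT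
      have hcontz : ContinuousOn
          (fun η : EuclideanSpace ℝ (Fin n) => (inner ℝ η z : ℝ)) T :=
        (continuous_id.inner continuous_const).continuousOn
      obtain ⟨ηs, hηsT, hMmax⟩ := hTc.exists_isMaxOn ⟨η₁, hη₁⟩ hcontz
      set M : ℝ := inner ℝ ηs z with hM
      have hMlt : M < d := by
        rcases lt_or_eq_of_le (hmax0 ηs hηsT.1) with h | h
        · exact h
        · exfalso
          have heqs := dual_max_unique hΦ hz hξ₀ hηsT.1 hmax0 h.symm
          have h2 : ε ≤ ‖ηs - ξ₀‖ := hηsT.2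
          rw [← heqs, sub_self, norm_zero] at h2
          linarith
      refine ⟨(d - M) / (2 * R + 1), div_pos (by linarith) (by positivity), ?_⟩
      intro η hη hlb
      by_contra hcl
      push_neg at hcl
      have hηT : η ∈ T := ⟨hη, hcl⟩
      have h2 : (inner ℝ η z : ℝ) ≤ M := hMmax hηT
      have h3 : 2 * R * ((d - M) / (2 * R + 1)) < d - M := by
        rw [mul_div_assoc']
        rw [div_lt_iff₀ (by positivity)]
        nlinarith
      linarith
    · push_neg at hT
      exact ⟨1, one_pos, fun η hη _ => hT η hη⟩
  obtain ⟨δ, hδpos, hδprop⟩ := hkey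
  filter_upwards [Metric.ball_mem_nhds (0 : EuclideanSpace ℝ (Fin n)) hδpos] with v hv
  rw [mem_ball_zero_iff] at hv
  obtain ⟨ξv, hξvS, heqv, hmaxv⟩ := dual_exists_max hΦ (z + v) z hz
  have E1 : (inner ℝ ξv (z + v) : ℝ) = (inner ℝ ξv z : ℝ) + (inner ℝ ξv v : ℝ) := inner_add_right _ _ _
  have E0 : (inner ℝ ξ₀ (z + v) : ℝ) = (inner ℝ ξ₀ z : ℝ) + (inner ℝ ξ₀ v : ℝ) := inner_add_right _ _ _
  have e1 : (inner ℝ ξ₀ (z + v) : ℝ) ≤ (inner ℝ ξv (z + v) : ℝ) := hmaxv _ hξ₀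
  have csv : |(inner ℝ ξv v : ℝ)| ≤ R * ‖v‖ := by
    calc |(inner ℝ ξv v : ℝ)| ≤ ‖ξv‖ * ‖v‖ := abs_real_inner_le_norm _ _
    _ ≤ R * ‖v‖ := mul_le_mul_of_nonneg_right (hnormS ξv hξvS) (norm_nonneg v)
  have cs0 : |(inner ℝ ξ₀ v : ℝ)| ≤ R * ‖v‖ := by
    calc |(inner ℝ ξ₀ v : ℝ)| ≤ ‖ξ₀‖ * ‖v‖ := abs_real_inner_le_norm _ _
    _ ≤ R * ‖v‖ := mul_le_mul_of_nonneg_right (hnormS ξ₀ hξ₀) (norm_nonneg v)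
  have hlb : d - 2 * R * δ < (inner ℝ ξv z : ℝ) := by
    have hav := abs_le.1 csv
    have ha0 := abs_le.1 cs0
    have : R * ‖v‖ < R * δ := by
      apply mul_lt_mul_of_pos_left hv hRpos
    rw [E1, E0] at e1
    rw [hd]
    linarith
  have hclose : ‖ξv - ξ₀‖ < ε := hδprop ξv hξvS hlb
  have hmz : (inner ℝ ξv z : ℝ) ≤ (inner ℝ ξ₀ z : ℝ) := hmax0 ξv hξvS
  have hsub : (inner ℝ ξv v : ℝ) - (inner ℝ ξ₀ v : ℝ) ≤ ‖ξv - ξ₀‖ * ‖v‖ := by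
    rw [← inner_sub_left]
    exact real_inner_le_norm _ _
  have hεb : ‖ξv - ξ₀‖ * ‖v‖ ≤ ε * ‖v‖ := mul_le_mul_of_nonneg_right hclose.le (norm_nonneg v)
  rw [heqv, heq0, innerSL_apply_apply]
  rw [E1, E0] at e1
  rw [Real.norm_eq_abs, abs_le]
  have hεnn : 0 ≤ ε * ‖v‖ := by positivity
  constructor
  · rw [E1, hd]
    linarith
  · rw [E1, hd]
    linarith

lemma euler (hΦ : IsFinslerNorm Φ) {ξ : EuclideanSpace ℝ (Fin n)} (hξ : ξ ≠ 0) :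
    (inner ℝ (gradient Φ ξ) ξ : ℝ) = Φ ξ := by
  have hd : DifferentiableAt ℝ Φ ξ :=
    (hΦ.contDiff.contDiffAt ((isOpen_compl_singleton).mem_nhds hξ)).differentiableAt (by norm_num)
  have hc : HasDerivAt (fun t : ℝ => t • ξ) ξ 1 := by
    simpa using (hasDerivAt_id (1 : ℝ)).smul_const ξ
  have hΦ1 : HasFDerivAt Φ (fderiv ℝ Φ ξ) ((1 : ℝ) • ξ) := by
    rw [one_smul]; exact hd.hasFDerivAt
  have h1 : HasDerivAt (fun t : ℝ => Φ (t • ξ)) (fderiv ℝ Φ ξ ξ) 1 := by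
    have h := hΦ1.comp_hasDerivAt 1 hc
    exact h
  have heq : (fun t : ℝ => Φ (t • ξ)) =ᶠ[𝓝 (1 : ℝ)] fun t => t * Φ ξ := by
    filter_upwards [eventually_gt_nhds (zero_lt_one)] with t ht
    rw [hΦ.homog, abs_of_pos ht]
  have h2 : HasDerivAt (fun t : ℝ => Φ (t • ξ)) (Φ ξ) 1 := by
    have h2' : HasDerivAt (fun t : ℝ => t * Φ ξ) (Φ ξ) 1 := by
      simpa using (hasDerivAt_id (1 : ℝ)).mul_const (Φ ξ)
    exact h2'.congr_of_eventuallyEq heq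
  have hfd : fderiv ℝ Φ ξ ξ = Φ ξ := h1.unique h2
  rw [gradient, InnerProductSpace.toDual_symm_apply, hfd]

lemma gradient_contDiffAt {f : EuclideanSpace ℝ (Fin n) → ℝ} {x : EuclideanSpace ℝ (Fin n)}
    (hf : ContDiffAt ℝ 2 f x) : ContDiffAt ℝ 1 (gradient f) x := by
  have h1 : ContDiffAt ℝ 1 (fderiv ℝ f) x := hf.fderiv_right (by norm_num)
  have h2 : ContDiffAt ℝ 1
      (fun y => (InnerProductSpace.toDual ℝ (EuclideanSpace ℝ (Fin n))).symm (fderiv ℝ f y)) x :=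
    ((InnerProductSpace.toDual ℝ (EuclideanSpace ℝ (Fin n))).symm.contDiff.contDiffAt).comp x h1
  exact h2

lemma fderiv_apply_single {f : EuclideanSpace ℝ (Fin n) → ℝ} {x : EuclideanSpace ℝ (Fin n)}
    (i : Fin n) : fderiv ℝ f x (EuclideanSpace.single i 1) = gradient f x i := by
  have h1 : (inner ℝ (gradient f x) (EuclideanSpace.single i (1:ℝ)) : ℝ)
      = fderiv ℝ f x (EuclideanSpace.single i 1) := by
    rw [gradient, InnerProductSpace.toDual_symm_apply]
  rw [← h1, EuclideanSpace.inner_single_right]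
  simp

end FinslerAux


/-- **The Weierstrass field `F` built from a solution `φ` is divergence free** (Section 4). -/
theorem field_divergence_free (N : ℕ) (hN : 3 ≤ N) (c : ℝ)
    (Φ : EuclideanSpace ℝ (Fin N) → ℝ) (hΦ : IsFinslerNorm Φ)
    (U : Set (EuclideanSpace ℝ (Fin N))) (hU : IsOpen U)
    (h0U : (0 : EuclideanSpace ℝ (Fin N)) ∉ U)
    (φ : EuclideanSpace ℝ (Fin N) → ℝ) (hφC2 : ContDiffOn ℝ 2 φ U)
    (hφpos : ∀ z ∈ U, 0 < φ z)
    (hgrad : ∀ z ∈ U, gradient φ z ≠ 0)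
    (hpde : ∀ z ∈ U, finslerLapE Φ φ z + c * φ z / dualNorm Φ z ^ 2 = 0)
    (F : EuclideanSpace ℝ (Fin N) × ℝ → EuclideanSpace ℝ (Fin N) × ℝ)
    (hF : ∀ p, F p =
      ((2 * p.2 / φ p.1) • (Φ (gradient φ p.1) • gradient Φ (gradient φ p.1)),
        p.2 ^ 2 / φ p.1 ^ 2 * Φ (gradient φ p.1) ^ 2 +
          c * p.2 ^ 2 / dualNorm Φ p.1 ^ 2)) :
    ∀ z ∈ U, ∀ h : ℝ, div2 F (z, h) = 0 := by
  intro z hz h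
  classical
  have hznz : z ≠ 0 := fun h0 => h0U (h0 ▸ hz)
  have hφz : φ z ≠ 0 := ne_of_gt (hφpos z hz)
  have hGz : gradient φ z ≠ 0 := hgrad z hz
  have hdz : dualNorm Φ z ≠ 0 := ne_of_gt (FinslerAux.dual_pos hΦ hznz)
  -- differentiability ingredients
  have hφC2z : ContDiffAt ℝ 2 φ z := hφC2.contDiffAt (hU.mem_nhds hz)
  have hφd : DifferentiableAt ℝ φ z := hφC2z.differentiableAt (by norm_num)
  have hGd : DifferentiableAt ℝ (gradient φ) z :=
    (FinslerAux.gradient_contDiffAt hφC2z).differentiableAt one_ne_zero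
  have hΦc2 : ContDiffAt ℝ 2 Φ (gradient φ z) :=
    hΦ.contDiff.contDiffAt ((isOpen_compl_singleton).mem_nhds hGz)
  have hΦd : DifferentiableAt ℝ Φ (gradient φ z) := hΦc2.differentiableAt (by norm_num)
  have hgΦd : DifferentiableAt ℝ (gradient Φ) (gradient φ z) :=
    (FinslerAux.gradient_contDiffAt hΦc2).differentiableAt one_ne_zero
  have hΦGd : DifferentiableAt ℝ (fun w => Φ (gradient φ w)) z := hΦd.comp z hGd
  have hgΦGd : DifferentiableAt ℝ (fun w => gradient Φ (gradient φ w)) z := hgΦd.comp z hGd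
  set W : EuclideanSpace ℝ (Fin N) → EuclideanSpace ℝ (Fin N) :=
    fun w => Φ (gradient φ w) • gradient Φ (gradient φ w) with hW
  have hWd : DifferentiableAt ℝ W z := hΦGd.smul hgΦGd
  set F₁ : EuclideanSpace ℝ (Fin N) × ℝ → EuclideanSpace ℝ (Fin N) :=
    fun p => (2 * p.2 / φ p.1) • W p.1 with hF₁
  set F₂ : EuclideanSpace ℝ (Fin N) × ℝ → ℝ :=
    fun p => p.2 ^ 2 / φ p.1 ^ 2 * Φ (gradient φ p.1) ^ 2 +
      c * p.2 ^ 2 / dualNorm Φ p.1 ^ 2 with hF₂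
  have hFe : F = fun p => (F₁ p, F₂ p) := funext hF
  have hφfst : DifferentiableAt ℝ (fun p : EuclideanSpace ℝ (Fin N) × ℝ => φ p.1) (z, h) :=
    hφd.comp _ differentiableAt_fst
  have hWfst : DifferentiableAt ℝ (fun p : EuclideanSpace ℝ (Fin N) × ℝ => W p.1) (z, h) :=
    DifferentiableAt.comp (g := W) (f := Prod.fst) (z, h) hWd differentiableAt_fst
  have hΦGfst : DifferentiableAt ℝ
      (fun p : EuclideanSpace ℝ (Fin N) × ℝ => Φ (gradient φ p.1)) (z, h) :=
    DifferentiableAt.comp (g := fun w => Φ (gradient φ w)) (f := Prod.fst) (z, h) hΦGd differentiableAt_fst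
  have hdualfst : DifferentiableAt ℝ
      (fun p : EuclideanSpace ℝ (Fin N) × ℝ => dualNorm Φ p.1) (z, h) :=
    DifferentiableAt.comp (g := dualNorm Φ) (f := Prod.fst) (z, h) (FinslerAux.dual_differentiableAt hΦ hznz) differentiableAt_fst
  have h2snd : DifferentiableAt ℝ
      (fun p : EuclideanSpace ℝ (Fin N) × ℝ => 2 * p.2) (z, h) :=
    differentiableAt_snd.const_mul (2 : ℝ)
  have hsndsq : DifferentiableAt ℝ
      (fun p : EuclideanSpace ℝ (Fin N) × ℝ => p.2 ^ 2) (z, h) :=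
    differentiableAt_snd.pow 2
  have hF1d : DifferentiableAt ℝ F₁ (z, h) := by
    rw [hF₁]
    simp only [div_eq_mul_inv]
    exact (h2snd.mul (hφfst.inv hφz)).smul hWfst
  have hF2d : DifferentiableAt ℝ F₂ (z, h) := by
    rw [hF₂]
    simp only [div_eq_mul_inv]
    exact ((hsndsq.mul ((hφfst.pow 2).inv (pow_ne_zero 2 hφz))).mul (hΦGfst.pow 2)).add
      ((hsndsq.const_mul c).mul ((hdualfst.pow 2).inv (pow_ne_zero 2 hdz)))
  -- reduce to partial derivatives
  have hι : HasFDerivAt (fun w : EuclideanSpace ℝ (Fin N) => (w, h))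
      ((ContinuousLinearMap.id ℝ (EuclideanSpace ℝ (Fin N))).prod 0) z :=
    (hasFDerivAt_id z).prodMk (hasFDerivAt_const h z)
  have hιt : HasFDerivAt (fun s : ℝ => (z, s))
      ((0 : ℝ →L[ℝ] EuclideanSpace ℝ (Fin N)).prod (ContinuousLinearMap.id ℝ ℝ)) h :=
    (hasFDerivAt_const z h).prodMk (hasFDerivAt_id h)
  have hcomp1 : ∀ v : EuclideanSpace ℝ (Fin N),
      fderiv ℝ F₁ (z, h) (v, 0) = fderiv ℝ (fun w => F₁ (w, h)) z v := by
    intro v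
    have hce : (fun w : EuclideanSpace ℝ (Fin N) => F₁ (w, h))
        = F₁ ∘ (fun w : EuclideanSpace ℝ (Fin N) => (w, h)) := rfl
    rw [hce, fderiv_comp z hF1d hι.differentiableAt, hι.fderiv]
    simp
  have hcomp2 : fderiv ℝ F₂ (z, h) (0, 1) = deriv (fun s : ℝ => F₂ (z, s)) h := by
    have hce : (fun s : ℝ => F₂ (z, s)) = F₂ ∘ (fun s : ℝ => (z, s)) := rfl
    rw [← fderiv_apply_one_eq_deriv, hce, fderiv_comp h hF2d hιt.differentiableAt, hιt.fderiv]
    simp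
  -- derivative of the spatial part
  have hinvd : HasDerivAt (fun y : ℝ => 2 * h * y⁻¹) (2 * h * (-(φ z ^ 2)⁻¹)) (φ z) := by
    simpa [mul_comm] using (hasDerivAt_inv hφz).const_mul (2 * h)
  have ha : HasFDerivAt (fun w => 2 * h / φ w)
      ((2 * h * (-(φ z ^ 2)⁻¹)) • fderiv ℝ φ z) z := by
    simp only [div_eq_mul_inv]
    exact hinvd.comp_hasFDerivAt z hφd.hasFDerivAt
  have hB : HasFDerivAt (fun w => (2 * h / φ w) • W w)
      ((2 * h / φ z) • fderiv ℝ W z +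
        ((2 * h * (-(φ z ^ 2)⁻¹)) • fderiv ℝ φ z).smulRight (W z)) z :=
    ha.smul hWd.hasFDerivAt
  -- spatial divergence computation
  have hlapE : divE W z = finslerLapE Φ φ z := rfl
  have hlap : divE W z = -(c * φ z / dualNorm Φ z ^ 2) := by
    rw [hlapE]
    have := hpde z hz
    linarith
  have hinnerGW : (inner ℝ (gradient φ z) (W z) : ℝ) = Φ (gradient φ z) ^ 2 := by
    rw [hW]
    simp only [real_inner_smul_right]
    rw [real_inner_comm, FinslerAux.euler hΦ hGz]
    ring
  have hsumGW : ∑ i, gradient φ z i * W z i = Φ (gradient φ z) ^ 2 := by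
    rw [← hinnerGW]
    rw [PiLp.inner_apply]
    simp [RCLike.inner_apply, conj_trivial]
    exact Finset.sum_congr rfl fun i _ => mul_comm _ _
  have hterm1 : ∑ i, fderiv ℝ F₁ (z, h) (EuclideanSpace.single i 1, 0) i
      = 2 * h / φ z * -(c * φ z / dualNorm Φ z ^ 2)
        + 2 * h * (-(φ z ^ 2)⁻¹) * Φ (gradient φ z) ^ 2 := by
    have hBe : (fun w : EuclideanSpace ℝ (Fin N) => F₁ (w, h))
        = fun w => (2 * h / φ w) • W w := rfl
    have hfd : fderiv ℝ (fun w => F₁ (w, h)) z = (2 * h / φ z) • fderiv ℝ W z +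
        ((2 * h * (-(φ z ^ 2)⁻¹)) • fderiv ℝ φ z).smulRight (W z) := by
      rw [hBe]; exact hB.fderiv
    calc ∑ i, fderiv ℝ F₁ (z, h) (EuclideanSpace.single i 1, 0) i
        = ∑ i, ((2 * h / φ z) * (fderiv ℝ W z (EuclideanSpace.single i 1) i)
            + (2 * h * (-(φ z ^ 2)⁻¹)) * (fderiv ℝ φ z (EuclideanSpace.single i 1)) * W z i) := by
          apply Finset.sum_congr rfl
          intro i _
          rw [hcomp1, hfd]
          simp [ContinuousLinearMap.add_apply, ContinuousLinearMap.smul_apply,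
            ContinuousLinearMap.smulRight_apply, PiLp.add_apply, PiLp.smul_apply,
            smul_eq_mul, mul_assoc]
    _ = (2 * h / φ z) * divE W z
        + (2 * h * (-(φ z ^ 2)⁻¹)) * ∑ i, gradient φ z i * W z i := by
          rw [Finset.sum_add_distrib, ← Finset.mul_sum]
          congr 1
          rw [Finset.mul_sum]
          apply Finset.sum_congr rfl
          intro i _
          rw [FinslerAux.fderiv_apply_single]
          ring
    _ = _ := by rw [hlap, hsumGW]
  have hterm2 : deriv (fun s : ℝ => F₂ (z, s)) h
      = 2 * h * (Φ (gradient φ z) ^ 2 / φ z ^ 2 + c / dualNorm Φ z ^ 2) := by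
    have he2 : (fun s : ℝ => F₂ (z, s))
        = fun s : ℝ => s ^ 2 * (Φ (gradient φ z) ^ 2 / φ z ^ 2 + c / dualNorm Φ z ^ 2) := by
      funext s
      rw [hF₂]
      ring
    rw [he2]
    have := (hasDerivAt_pow 2 h).mul_const
      (Φ (gradient φ z) ^ 2 / φ z ^ 2 + c / dualNorm Φ z ^ 2)
    rw [this.deriv]
    ring
  -- assemble
  rw [hFe, div2]
  rw [hF1d.fderiv_prodMk hF2d]
  simp only [ContinuousLinearMap.prod_apply]
  rw [hcomp2, hterm2]
  rw [hterm1]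
  field_simp
  ring
end
end

section
/- Let N ≥ 3. Let H be a Finsler norm on ℝ^{N-1} with dual norm H⁰, let Φ(ξ,t) = √(H(ξ)²+t²) and Φ⁰(x,t) = √(H⁰(x)²+t²). Let f : (0, π/2) → ℝ be continuously differentiable and define φ(x,t) = Φ⁰(x,t)^{1−N/2} f(arctan(t/H⁰(x))) for x ≠ 0, t > 0. Then at every point (x,t) with x ≠ 0, t > 0 and ∇φ(x,t) ≠ 0, we have ⟨ Φ(∇φ) ∇Φ(∇φ), ∇Φ⁰(x,t) ⟩ = − ((N−2)/(2 Φ⁰(x,t))) φ(x,t), where ⟨·,·⟩ is the Euclidean inner product on ℝ^N. -/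
open Real MeasureTheory Filter Set

noncomputable section

open Topology

namespace FluxAux

variable {n : ℕ} {H : EuclideanSpace ℝ (Fin n) → ℝ}

theorem H_zero (hH : IsFinslerNorm H) : H 0 = 0 := by
  have := hH.homog 0 0
  simpa using this

theorem H_pos (hH : IsFinslerNorm H) {ξ : EuclideanSpace ℝ (Fin n)} (hξ : ξ ≠ 0) : 0 < H ξ := by
  obtain ⟨γ₁, γ₂, h1, h12, hb⟩ := hH.bounds
  have hn0 : 0 < ‖ξ‖ := norm_pos_iff.2 hξ
  nlinarith [(hb ξ).1]

theorem H_cont (hH : IsFinslerNorm H) : Continuous H := by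
  rw [continuous_iff_continuousAt]
  intro ξ
  by_cases hξ : ξ = 0
  · subst hξ
    obtain ⟨γ₁, γ₂, h1, h12, hb⟩ := hH.bounds
    unfold ContinuousAt
    rw [H_zero hH]
    apply squeeze_zero hH.nonneg (fun ξ => (hb ξ).2)
    have : Continuous (fun ξ : EuclideanSpace ℝ (Fin n) => γ₂ * ‖ξ‖) := by continuity
    simpa using this.tendsto 0
  · exact (hH.contDiff.continuousOn).continuousAt (isOpen_compl_singleton.mem_nhds hξ)

theorem H_diff (hH : IsFinslerNorm H) {ξ : EuclideanSpace ℝ (Fin n)} (hξ : ξ ≠ 0) :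
    DifferentiableAt ℝ H ξ :=
  ((hH.contDiff.differentiableOn (by norm_num)).differentiableAt
    (isOpen_compl_singleton.mem_nhds hξ))

theorem isCompact_K (hH : IsFinslerNorm H) :
    IsCompact {ξ : EuclideanSpace ℝ (Fin n) | H ξ ≤ 1} := by
  obtain ⟨γ₁, γ₂, h1, h12, hb⟩ := hH.bounds
  apply Metric.isCompact_of_isClosed_isBounded (isClosed_le (H_cont hH) continuous_const)
  apply Bornology.IsBounded.subset (Metric.isBounded_closedBall (x := (0:EuclideanSpace ℝ (Fin n))) (r := γ₁⁻¹))
  intro ξ hξ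
  have hξ' : H ξ ≤ 1 := hξ
  rw [Metric.mem_closedBall, dist_zero_right, ← one_div, le_div_iff₀ h1]
  nlinarith [(hb ξ).1]

theorem dual_bddAbove (hH : IsFinslerNorm H) (y : EuclideanSpace ℝ (Fin n)) :
    BddAbove ((fun ξ => (inner ℝ ξ y : ℝ) / H ξ) '' {ξ : EuclideanSpace ℝ (Fin n) | ξ ≠ 0}) := by
  obtain ⟨γ₁, γ₂, h1, h12, hb⟩ := hH.bounds
  refine ⟨‖y‖ / γ₁, ?_⟩
  rintro a ⟨ξ, hξ, rfl⟩
  have hpos := H_pos hH hξ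
  rw [div_le_div_iff₀ hpos h1]
  have h2 := real_inner_le_norm ξ y
  have h3 := (hb ξ).1
  nlinarith [norm_nonneg ξ, norm_nonneg y]

theorem inner_le_dual (hH : IsFinslerNorm H) (ξ y : EuclideanSpace ℝ (Fin n)) :
    (inner ℝ ξ y : ℝ) ≤ H ξ * dualNorm H y := by
  by_cases hξ : ξ = 0
  · simp [hξ, H_zero hH]
  · have h1 : (inner ℝ ξ y : ℝ) / H ξ ≤ dualNorm H y :=
      le_csSup (dual_bddAbove hH y) ⟨ξ, hξ, rfl⟩
    have hpos := H_pos hH hξ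
    rw [div_le_iff₀ hpos] at h1
    linarith [h1]

theorem dualNorm_pos (hH : IsFinslerNorm H) {x : EuclideanSpace ℝ (Fin n)} (hx : x ≠ 0) :
    0 < dualNorm H x := by
  have h1 : (inner ℝ x x : ℝ) / H x ≤ dualNorm H x := le_csSup (dual_bddAbove hH x) ⟨x, hx, rfl⟩
  have h2 : (0:ℝ) < (inner ℝ x x : ℝ) / H x := by
    rw [real_inner_self_eq_norm_sq]
    have := H_pos hH hx
    have : 0 < ‖x‖ := norm_pos_iff.2 hx
    positivity
  linarith

theorem dualNorm_zero (hH : IsFinslerNorm H) (hn : 0 < n) : dualNorm H 0 = 0 := by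
  have hne : ((fun ξ => (inner ℝ ξ (0:EuclideanSpace ℝ (Fin n)) : ℝ) / H ξ) ''
      {ξ : EuclideanSpace ℝ (Fin n) | ξ ≠ 0}).Nonempty := by
    refine ⟨0, ⟨EuclideanSpace.single (⟨0, hn⟩ : Fin n) (1:ℝ), ?_, by simp⟩⟩
    intro h
    have := congrArg norm h
    rw [EuclideanSpace.norm_single] at this
    simp at this
  refine le_antisymm (csSup_le hne ?_) ?_
  · rintro a ⟨ξ, hξ, rfl⟩
    simp
  · obtain ⟨a, ha⟩ := hne
    have : a = 0 := by
      obtain ⟨ξ, hξ, rfl⟩ := ha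
      simp
    rw [← this]
    exact le_csSup (dual_bddAbove hH 0) ha

theorem dualNorm_nonneg (hH : IsFinslerNorm H) (hn : 0 < n) (x : EuclideanSpace ℝ (Fin n)) :
    0 ≤ dualNorm H x := by
  by_cases hx : x = 0
  · rw [hx, dualNorm_zero hH hn]
  · exact (dualNorm_pos hH hx).le

theorem exists_maximizer (hH : IsFinslerNorm H) (hn : 0 < n) (y : EuclideanSpace ℝ (Fin n)) :
    ∃ v, H v ≤ 1 ∧ (inner ℝ v y : ℝ) = dualNorm H y := by
  by_cases hy : y = 0
  · exact ⟨0, by simp [H_zero hH], by simp [hy, dualNorm_zero hH hn]⟩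
  obtain ⟨v, hvK, hmax⟩ := (isCompact_K hH).exists_isMaxOn
    (f := fun ξ : EuclideanSpace ℝ (Fin n) => (inner ℝ ξ y : ℝ))
    ⟨0, by simp [H_zero hH]⟩
    (Continuous.continuousOn
      (show Continuous fun ξ : EuclideanSpace ℝ (Fin n) => (inner ℝ ξ y : ℝ) from
        continuous_id.inner continuous_const))
  rw [isMaxOn_iff] at hmax
  refine ⟨v, hvK, le_antisymm ?_ ?_⟩
  · calc (inner ℝ v y : ℝ) ≤ H v * dualNorm H y := inner_le_dual hH v y
      _ ≤ 1 * dualNorm H y := mul_le_mul_of_nonneg_right hvK (dualNorm_nonneg hH hn y)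
      _ = dualNorm H y := one_mul _
  · unfold dualNorm
    refine csSup_le ⟨_, ⟨y, hy, rfl⟩⟩ ?_
    rintro a ⟨ξ, hξ, rfl⟩
    have hpos := H_pos hH hξ
    have hζ : ((H ξ)⁻¹ • ξ) ∈ {ξ : EuclideanSpace ℝ (Fin n) | H ξ ≤ 1} := by
      show H _ ≤ 1
      rw [hH.homog, abs_of_pos (inv_pos.2 hpos), inv_mul_cancel₀ hpos.ne']
    have h2 := hmax _ hζ
    rw [real_inner_smul_left] at h2
    show (inner ℝ ξ y : ℝ) / H ξ ≤ _
    rwa [div_eq_inv_mul]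

theorem maximizer_unique (hH : IsFinslerNorm H) {x : EuclideanSpace ℝ (Fin n)} (hx : x ≠ 0)
    {v₁ v₂ : EuclideanSpace ℝ (Fin n)} (h₁ : H v₁ ≤ 1) (e₁ : (inner ℝ v₁ x : ℝ) = dualNorm H x)
    (h₂ : H v₂ ≤ 1) (e₂ : (inner ℝ v₂ x : ℝ) = dualNorm H x) : v₁ = v₂ := by
  by_contra hne
  have hmem := hH.strictConvex h₁ h₂ hne (by norm_num : (0:ℝ) < 1/2)
    (by norm_num : (0:ℝ) < 1/2) (by norm_num)
  rw [mem_interior_iff_mem_nhds, Metric.mem_nhds_iff] at hmem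
  obtain ⟨ε, hε, hball⟩ := hmem
  have hxn : 0 < ‖x‖ := norm_pos_iff.2 hx
  have hζK : ((1:ℝ)/2) • v₁ + ((1:ℝ)/2) • v₂ + (ε / (2 * ‖x‖)) • x ∈
      {ξ : EuclideanSpace ℝ (Fin n) | H ξ ≤ 1} := by
    apply hball
    rw [Metric.mem_ball, dist_eq_norm, add_sub_cancel_left, norm_smul, Real.norm_eq_abs,
      abs_of_pos (by positivity)]
    have : ε / (2 * ‖x‖) * ‖x‖ = ε / 2 := by field_simp
    rw [this]
    linarith
  have hle := inner_le_dual hH (((1:ℝ)/2) • v₁ + ((1:ℝ)/2) • v₂ + (ε / (2 * ‖x‖)) • x) x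
  have hH1 : H (((1:ℝ)/2) • v₁ + ((1:ℝ)/2) • v₂ + (ε / (2 * ‖x‖)) • x) ≤ 1 := hζK
  have hexp : (inner ℝ (((1:ℝ)/2) • v₁ + ((1:ℝ)/2) • v₂ + (ε / (2 * ‖x‖)) • x) x : ℝ)
      = dualNorm H x + (ε / (2 * ‖x‖)) * ‖x‖^2 := by
    rw [inner_add_left, inner_add_left, real_inner_smul_left, real_inner_smul_left,
      real_inner_smul_left, e₁, e₂, real_inner_self_eq_norm_sq]
    ring
  have hgx := dualNorm_pos hH hx
  have hq : 0 < ε / (2 * ‖x‖) * ‖x‖^2 := by positivity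
  nlinarith

theorem dualNorm_le_add (hH : IsFinslerNorm H) (hn : 0 < n) {γ₁ : ℝ} (h1 : 0 < γ₁)
    (hb : ∀ ξ : EuclideanSpace ℝ (Fin n), γ₁ * ‖ξ‖ ≤ H ξ)
    (y z : EuclideanSpace ℝ (Fin n)) :
    dualNorm H y ≤ dualNorm H z + γ₁⁻¹ * ‖y - z‖ := by
  obtain ⟨v, hv, hvy⟩ := exists_maximizer hH hn y
  have h2 : (inner ℝ v z : ℝ) ≤ dualNorm H z := by
    have := inner_le_dual hH v z
    nlinarith [dualNorm_nonneg hH hn z]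
  have h3 : (inner ℝ v (y - z) : ℝ) ≤ ‖v‖ * ‖y - z‖ := real_inner_le_norm _ _
  have h4 : ‖v‖ ≤ γ₁⁻¹ := by
    rw [← one_div, le_div_iff₀ h1]
    nlinarith [hb v]
  have h5 : (inner ℝ v y : ℝ) = inner ℝ v z + inner ℝ v (y - z) := by
    rw [inner_sub_right]; ring
  have h6 : ‖v‖ * ‖y - z‖ ≤ γ₁⁻¹ * ‖y - z‖ := mul_le_mul_of_nonneg_right h4 (norm_nonneg _)
  linarith [hvy.symm.le, hvy.le]

theorem dualNorm_continuous (hH : IsFinslerNorm H) (hn : 0 < n) :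
    Continuous (dualNorm H) := by
  obtain ⟨γ₁, γ₂, h1, h12, hb⟩ := hH.bounds
  apply LipschitzWith.continuous (K := ⟨γ₁⁻¹, by positivity⟩)
  apply LipschitzWith.of_dist_le_mul
  intro y z
  rw [Real.dist_eq, dist_eq_norm]
  rw [abs_sub_le_iff]
  constructor
  · have := dualNorm_le_add hH hn h1 (fun ξ => (hb ξ).1) y z
    change _ ≤ γ₁⁻¹ * ‖y - z‖
    linarith
  · have := dualNorm_le_add hH hn h1 (fun ξ => (hb ξ).1) z y
    rw [norm_sub_rev] at this
    change _ ≤ γ₁⁻¹ * ‖y - z‖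
    linarith

theorem hasGradientAt_dualNorm (hH : IsFinslerNorm H) (hn : 0 < n)
    {x : EuclideanSpace ℝ (Fin n)} (hx : x ≠ 0) :
    ∃ v, H v = 1 ∧ (inner ℝ v x : ℝ) = dualNorm H x ∧ HasGradientAt (dualNorm H) v x := by
  classical
  obtain ⟨v, hv1, hvx⟩ := exists_maximizer hH hn x
  have hgx : 0 < dualNorm H x := dualNorm_pos hH hx
  have hv1' : H v = 1 := by
    refine le_antisymm hv1 ?_
    by_contra hlt
    push_neg at hlt
    have := inner_le_dual hH v x
    nlinarith
  refine ⟨v, hv1', hvx, ?_⟩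
  set V : EuclideanSpace ℝ (Fin n) → EuclideanSpace ℝ (Fin n) :=
    fun y => (exists_maximizer hH hn y).choose with hV
  have hVK : ∀ y, H (V y) ≤ 1 := fun y => (exists_maximizer hH hn y).choose_spec.1
  have hVy : ∀ y, (inner ℝ (V y) y : ℝ) = dualNorm H y :=
    fun y => (exists_maximizer hH hn y).choose_spec.2
  have hcont : Tendsto V (𝓝 x) (𝓝 v) := by
    rw [tendsto_iff_seq_tendsto]
    intro u hu
    apply tendsto_of_subseq_tendsto
    intro ns hns
    obtain ⟨w, hwK, ms, hms, hlim⟩ := (isCompact_K hH).tendsto_subseq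
      (x := fun k => V (u (ns k))) (fun k => hVK (u (ns k)))
    refine ⟨ms, ?_⟩
    have hlim' : Tendsto (fun j => V (u (ns (ms j)))) atTop (𝓝 w) := hlim
    have h1 : Tendsto (fun j => u (ns (ms j))) atTop (𝓝 x) :=
      hu.comp (hns.comp hms.tendsto_atTop)
    have h2 : Tendsto (fun j => (inner ℝ (V (u (ns (ms j)))) (u (ns (ms j))) : ℝ)) atTop
        (𝓝 (inner ℝ w x)) := Filter.Tendsto.inner hlim' h1
    have h2' : Tendsto (fun j => dualNorm H (u (ns (ms j)))) atTop (𝓝 (inner ℝ w x : ℝ)) := by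
      simpa only [hVy] using h2
    have h3 : Tendsto (fun j => dualNorm H (u (ns (ms j)))) atTop (𝓝 (dualNorm H x)) :=
      ((dualNorm_continuous hH hn).tendsto x).comp h1
    have h4 : (inner ℝ w x : ℝ) = dualNorm H x := tendsto_nhds_unique h2' h3
    have hwv : w = v := maximizer_unique hH hx hwK h4 hv1 hvx
    exact hwv ▸ hlim'
  rw [hasGradientAt_iff_hasFDerivAt, hasFDerivAt_iff_isLittleO_nhds_zero,
    Asymptotics.isLittleO_iff]
  intro ε hε
  have hVnear : ∀ᶠ h : EuclideanSpace ℝ (Fin n) in 𝓝 0, ‖V (x + h) - v‖ ≤ ε := by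
    have t1 : Tendsto (fun h : EuclideanSpace ℝ (Fin n) => x + h) (𝓝 0) (𝓝 x) := by
      exact (continuous_const.add continuous_id).tendsto' _ _ (by simp)
    have t2 : Tendsto (fun h : EuclideanSpace ℝ (Fin n) => V (x + h)) (𝓝 0) (𝓝 v) :=
      hcont.comp t1
    have t3 : Tendsto (fun h : EuclideanSpace ℝ (Fin n) => ‖V (x + h) - v‖) (𝓝 0) (𝓝 0) := by
      have := (t2.sub (tendsto_const_nhds (x := v))).norm
      simpa using this
    exact t3.eventually_le_const hε
  filter_upwards [hVnear] with h hh
  have hlow : 0 ≤ dualNorm H (x + h) - dualNorm H x - (inner ℝ v h : ℝ) := by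
    have hd := inner_le_dual hH v (x + h)
    rw [hv1', one_mul] at hd
    have he : (inner ℝ v (x + h) : ℝ) = inner ℝ v x + inner ℝ v h := inner_add_right v x h
    linarith [hvx.symm.le, hvx.le]
  have hup : dualNorm H (x + h) - dualNorm H x - (inner ℝ v h : ℝ) ≤ ‖V (x + h) - v‖ * ‖h‖ := by
    have e1 : (inner ℝ (V (x + h)) x : ℝ) ≤ dualNorm H x := by
      have := inner_le_dual hH (V (x + h)) x
      nlinarith [hVK (x + h)]
    have e2 : (inner ℝ (V (x + h) - v) h : ℝ) ≤ ‖V (x + h) - v‖ * ‖h‖ := by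
      have := real_inner_le_norm (V (x + h) - v) h
      exact this
    have e4 := hVy (x + h)
    rw [inner_sub_left] at e2
    rw [inner_add_right] at e4
    linarith
  have ht : ((InnerProductSpace.toDual ℝ (EuclideanSpace ℝ (Fin n))) v) h = (inner ℝ v h : ℝ) :=
    InnerProductSpace.toDual_apply_apply
  rw [ht, Real.norm_eq_abs, abs_of_nonneg hlow]
  nlinarith [norm_nonneg h]

theorem hasGradientAt_homog_pos (hH : IsFinslerNorm H) {ξ w : EuclideanSpace ℝ (Fin n)}
    (h : HasGradientAt H w ξ) {c : ℝ} (hc : 0 < c) : HasGradientAt H w (c • ξ) := by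
  rw [hasGradientAt_iff_hasFDerivAt] at h ⊢
  have hmap : HasFDerivAt (fun y : EuclideanSpace ℝ (Fin n) => c⁻¹ • y)
      (c⁻¹ • ContinuousLinearMap.id ℝ (EuclideanSpace ℝ (Fin n))) (c • ξ) :=
    (hasFDerivAt_id _).const_smul c⁻¹
  have heval : c⁻¹ • (c • ξ) = ξ := by rw [smul_smul, inv_mul_cancel₀ hc.ne', one_smul]
  have h' : HasFDerivAt H ((InnerProductSpace.toDual ℝ _) w) (c⁻¹ • (c • ξ)) := by
    rw [heval]; exact h
  have hcomp := HasFDerivAt.comp (c • ξ) h' hmap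
  have hcomp2 := hcomp.const_mul c
  have hfun : (fun y : EuclideanSpace ℝ (Fin n) =>
      c * (H ∘ fun y : EuclideanSpace ℝ (Fin n) => c⁻¹ • y) y) = H := by
    funext y
    simp only [Function.comp]
    rw [hH.homog, abs_of_pos (inv_pos.2 hc)]
    field_simp
  have hder : c • (((InnerProductSpace.toDual ℝ (EuclideanSpace ℝ (Fin n))) w).comp
      (c⁻¹ • ContinuousLinearMap.id ℝ (EuclideanSpace ℝ (Fin n))))
      = (InnerProductSpace.toDual ℝ (EuclideanSpace ℝ (Fin n))) w := by
    ext y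
    simp only [ContinuousLinearMap.coe_smul', Pi.smul_apply, ContinuousLinearMap.coe_comp',
      Function.comp_apply, ContinuousLinearMap.id_apply, InnerProductSpace.toDual_apply_apply,
      real_inner_smul_right, smul_eq_mul]
    field_simp
  rw [hfun, hder] at hcomp2
  exact hcomp2

theorem hasGradientAt_neg_point (hH : IsFinslerNorm H) {ξ w : EuclideanSpace ℝ (Fin n)}
    (h : HasGradientAt H w ξ) : HasGradientAt H (-w) (-ξ) := by
  rw [hasGradientAt_iff_hasFDerivAt] at h ⊢
  have hmap : HasFDerivAt (fun y : EuclideanSpace ℝ (Fin n) => -y)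
      (-(ContinuousLinearMap.id ℝ (EuclideanSpace ℝ (Fin n)))) (-ξ) :=
    (hasFDerivAt_id _).neg
  have h' : HasFDerivAt H ((InnerProductSpace.toDual ℝ _) w) (-(-ξ)) := (neg_neg ξ).symm ▸ h
  have hcomp := HasFDerivAt.comp (-ξ) h' hmap
  have hfun : (H ∘ fun y : EuclideanSpace ℝ (Fin n) => -y) = H := by
    funext y
    simp only [Function.comp]
    rw [← neg_one_smul ℝ y, hH.homog]
    norm_num
  have hder : ((InnerProductSpace.toDual ℝ (EuclideanSpace ℝ (Fin n))) w).comp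
      (-(ContinuousLinearMap.id ℝ (EuclideanSpace ℝ (Fin n))))
      = (InnerProductSpace.toDual ℝ (EuclideanSpace ℝ (Fin n))) (-w) := by
    ext y
    simp [InnerProductSpace.toDual_apply_apply, inner_neg_left, inner_neg_right]
  rw [hfun, hder] at hcomp
  exact hcomp

theorem hasGradientAt_H_max (hH : IsFinslerNorm H) {x v : EuclideanSpace ℝ (Fin n)}
    (hx : x ≠ 0) (hv1 : H v = 1) (hvx : (inner ℝ v x : ℝ) = dualNorm H x) :
    HasGradientAt H ((dualNorm H x)⁻¹ • x) v := by
  have hgx := dualNorm_pos hH hx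
  have hvne : v ≠ 0 := by
    intro hv0
    rw [hv0, H_zero hH] at hv1
    norm_num at hv1
  have hL : HasFDerivAt H (fderiv ℝ H v) v := (H_diff hH hvne).hasFDerivAt
  set m := dualNorm H x with hm
  set L := fderiv ℝ H v with hLdef
  have hF : HasFDerivAt (fun ξ : EuclideanSpace ℝ (Fin n) => (innerSL ℝ x) ξ - m * H ξ)
      ((innerSL ℝ x : EuclideanSpace ℝ (Fin n) →L[ℝ] ℝ) - m • L) v :=
    ((innerSL ℝ x).hasFDerivAt).sub (hL.const_mul m)
  have hmax : IsLocalMax (fun ξ : EuclideanSpace ℝ (Fin n) => (innerSL ℝ x) ξ - m * H ξ) v :=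
    Filter.Eventually.of_forall fun ξ => by
      simp only [innerSL_apply_apply]
      have h2 : (inner ℝ ξ x : ℝ) ≤ H ξ * m := inner_le_dual hH ξ x
      have h3 : (inner ℝ x ξ : ℝ) = inner ℝ ξ x := real_inner_comm ξ x
      have h4 : (inner ℝ x v : ℝ) = m := by rw [real_inner_comm v x]; exact hvx
      rw [h3, h4, hv1]
      linarith
  have h0 := hmax.hasFDerivAt_eq_zero hF
  rw [hasGradientAt_iff_hasFDerivAt]
  have hLeq : (InnerProductSpace.toDual ℝ (EuclideanSpace ℝ (Fin n))) (m⁻¹ • x) = L := by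
    ext y
    have h0y : ((innerSL ℝ x : EuclideanSpace ℝ (Fin n) →L[ℝ] ℝ) - m • L) y = 0 := by
      rw [h0]; rfl
    simp only [ContinuousLinearMap.sub_apply, ContinuousLinearMap.smul_apply, innerSL_apply_apply,
      smul_eq_mul] at h0y
    rw [InnerProductSpace.toDual_apply_apply, real_inner_smul_left]
    have hxy : (inner ℝ x y : ℝ) = m * L y := by linarith
    rw [hxy, inv_mul_cancel_left₀ hgx.ne']
  rw [hLeq]
  exact hL

theorem hasFDerivAt_Hsq_zero (hH : IsFinslerNorm H) :
    HasFDerivAt (fun ξ : EuclideanSpace ℝ (Fin n) => H ξ ^ 2)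
      (0 : EuclideanSpace ℝ (Fin n) →L[ℝ] ℝ) 0 := by
  obtain ⟨γ₁, γ₂, h1, h12, hb⟩ := hH.bounds
  have hγ₂ : 0 < γ₂ := lt_of_lt_of_le h1 h12
  rw [hasFDerivAt_iff_isLittleO_nhds_zero, Asymptotics.isLittleO_iff]
  intro ε hε
  have hev : ∀ᶠ h : EuclideanSpace ℝ (Fin n) in 𝓝 0, ‖h‖ ≤ ε / γ₂ ^ 2 := by
    have hmem : Metric.closedBall (0 : EuclideanSpace ℝ (Fin n)) (ε / γ₂ ^ 2) ∈
        𝓝 (0 : EuclideanSpace ℝ (Fin n)) := Metric.closedBall_mem_nhds _ (by positivity)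
    filter_upwards [hmem] with h hh
    simpa [Metric.mem_closedBall, dist_zero_right] using hh
  filter_upwards [hev] with h hh
  simp only [zero_add, ContinuousLinearMap.zero_apply, sub_zero, H_zero hH]
  rw [Real.norm_eq_abs]
  have hb2 := (hb h).2
  have h0 := hH.nonneg h
  have habs : |H h ^ 2 - 0 ^ 2| = H h ^ 2 := by
    rw [abs_of_nonneg] <;> nlinarith
  rw [habs]
  have k0 : γ₂ ^ 2 * ‖h‖ ≤ ε := (le_div_iff₀' (by positivity)).1 hh
  have k1 : H h ^ 2 ≤ γ₂ ^ 2 * ‖h‖ ^ 2 := by nlinarith [norm_nonneg h]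
  nlinarith [norm_nonneg h, k0, k1]

end FluxAux

set_option maxHeartbeats 1000000 in
/-- **The key flux identity (4.9): `⟨Φ(∇φ)∇Φ(∇φ), ∇Φ⁰⟩ = -((N-2)/(2Φ⁰)) φ`**. -/
theorem flux_identity (N : ℕ) (hN : 3 ≤ N)
    (H : EuclideanSpace ℝ (Fin (N - 1)) → ℝ) (hH : IsFinslerNorm H)
    (Φ Φ0 : EuclideanSpace ℝ (Fin (N - 1)) × ℝ → ℝ)
    (hΦ : ∀ p, Φ p = Real.sqrt (H p.1 ^ 2 + p.2 ^ 2))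
    (hΦ0 : ∀ p, Φ0 p = Real.sqrt (dualNorm H p.1 ^ 2 + p.2 ^ 2))
    (f : ℝ → ℝ) (hf : ContDiffOn ℝ 1 f (Ioo 0 (π / 2)))
    (φ : EuclideanSpace ℝ (Fin (N - 1)) × ℝ → ℝ)
    (hφ : ∀ p, φ p = Φ0 p ^ (1 - (N : ℝ) / 2) * f (Real.arctan (p.2 / dualNorm H p.1))) :
    ∀ x : EuclideanSpace ℝ (Fin (N - 1)), x ≠ 0 → ∀ t : ℝ, 0 < t →
      grad2 φ (x, t) ≠ 0 →
      (inner ℝ (Φ (grad2 φ (x, t)) • grad2 Φ (grad2 φ (x, t))).1 (grad2 Φ0 (x, t)).1 : ℝ) +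
          (Φ (grad2 φ (x, t)) • grad2 Φ (grad2 φ (x, t))).2 * (grad2 Φ0 (x, t)).2 =
        -((N - 2) / (2 * Φ0 (x, t))) * φ (x, t) := by
  intro x hx t ht hgrad
  have hn : 0 < N - 1 := by omega
  obtain ⟨v, hHv, hvx, hvgrad⟩ := FluxAux.hasGradientAt_dualNorm hH hn hx
  have hrpos : 0 < dualNorm H x := FluxAux.dualNorm_pos hH hx
  set r := dualNorm H x with hrdef
  have hvne : v ≠ 0 := by
    intro h0; rw [h0, FluxAux.H_zero hH] at hHv; norm_num at hHv
  set ρ := Real.sqrt (r ^ 2 + t ^ 2) with hρdef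
  have hρpos : 0 < ρ := Real.sqrt_pos.2 (by positivity)
  have hρsq : ρ ^ 2 = r ^ 2 + t ^ 2 := Real.sq_sqrt (by positivity)
  set θ := Real.arctan (t / r) with hθdef
  have hθmem : θ ∈ Ioo 0 (π / 2) := by
    constructor
    · rw [hθdef, ← Real.arctan_zero]
      exact Real.arctan_strictMono (by positivity)
    · exact Real.arctan_lt_pi_div_two _
  have hfd : DifferentiableAt ℝ f θ :=
    (hf.differentiableOn one_ne_zero).differentiableAt (isOpen_Ioo.mem_nhds hθmem)
  have hf' : HasDerivAt f (deriv f θ) θ := hfd.hasDerivAt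
  set F := f θ with hFdef
  set F' := deriv f θ with hF'def
  set q : ℝ := 1 - (N : ℝ) / 2 with hq
  set P := ρ ^ q with hP
  have hPpos : 0 < P := Real.rpow_pos_of_pos hρpos q
  set c : ℝ := (q * r * F - t * F') * (P / ρ ^ 2) with hc
  set d : ℝ := (q * t * F + r * F') * (P / ρ ^ 2) with hd
  have hρq1 : ρ ^ (q - 1) = P / ρ := by
    rw [hP, Real.rpow_sub hρpos, Real.rpow_one]
  have hone : 1 + (t / r) ^ 2 = ρ ^ 2 / r ^ 2 := by
    rw [hρsq]; field_simp
  -- the scalar function in the radial direction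
  have h1 : HasDerivAt (fun s : ℝ => s ^ 2 + t ^ 2) (2 * r) r := by
    simpa using (hasDerivAt_pow 2 r).add_const (t ^ 2)
  have h2 : HasDerivAt (fun s : ℝ => Real.sqrt (s ^ 2 + t ^ 2)) (2 * r / (2 * ρ)) r :=
    h1.sqrt (by positivity)
  have h3 : HasDerivAt (fun s : ℝ => Real.sqrt (s ^ 2 + t ^ 2) ^ q)
      (2 * r / (2 * ρ) * q * ρ ^ (q - 1)) r := by
    have := h2.rpow_const (p := q) (Or.inl hρpos.ne')
    convert this using 2 <;> rw [hρdef]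
  have h4 : HasDerivAt (fun s : ℝ => t / s) (t * -(r ^ 2)⁻¹) r := by
    simpa [div_eq_mul_inv] using (hasDerivAt_inv hrpos.ne').const_mul t
  have h5 : HasDerivAt (fun s : ℝ => Real.arctan (t / s))
      (1 / (1 + (t / r) ^ 2) * (t * -(r ^ 2)⁻¹)) r :=
    (Real.hasDerivAt_arctan (t / r)).comp r h4
  have h6 : HasDerivAt (fun s : ℝ => f (Real.arctan (t / s)))
      (F' * (1 / (1 + (t / r) ^ 2) * (t * -(r ^ 2)⁻¹))) r := hf'.comp r h5
  have hψr : HasDerivAt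
      (fun s : ℝ => Real.sqrt (s ^ 2 + t ^ 2) ^ q * f (Real.arctan (t / s))) c r := by
    have h7 := h3.mul h6
    refine h7.congr_deriv ?_
    rw [hρq1, hone, ← hρdef, ← hθdef, ← hFdef, hc]
    field_simp
    ring
  -- the scalar function in the t direction
  have k1 : HasDerivAt (fun s : ℝ => r ^ 2 + s ^ 2) (2 * t) t := by
    simpa using (hasDerivAt_pow 2 t).const_add (r ^ 2)
  have k2 : HasDerivAt (fun s : ℝ => Real.sqrt (r ^ 2 + s ^ 2)) (2 * t / (2 * ρ)) t :=
    k1.sqrt (by positivity)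
  have k3 : HasDerivAt (fun s : ℝ => Real.sqrt (r ^ 2 + s ^ 2) ^ q)
      (2 * t / (2 * ρ) * q * ρ ^ (q - 1)) t := by
    have := k2.rpow_const (p := q) (Or.inl hρpos.ne')
    convert this using 2 <;> rw [hρdef]
  have k4 : HasDerivAt (fun s : ℝ => s / r) (1 / r) t := by
    simpa using (hasDerivAt_id t).div_const r
  have k5 : HasDerivAt (fun s : ℝ => Real.arctan (s / r))
      (1 / (1 + (t / r) ^ 2) * (1 / r)) t := by
    have := (Real.hasDerivAt_arctan (t / r)).comp t k4
    exact this
  have k6 : HasDerivAt (fun s : ℝ => f (Real.arctan (s / r)))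
      (F' * (1 / (1 + (t / r) ^ 2) * (1 / r))) t := hf'.comp t k5
  have hψt : HasDerivAt
      (fun s : ℝ => Real.sqrt (r ^ 2 + s ^ 2) ^ q * f (Real.arctan (s / r))) d t := by
    have k7 := k3.mul k6
    refine k7.congr_deriv ?_
    rw [hρq1, hone, ← hρdef, ← hθdef, ← hFdef, hd]
    field_simp
    ring
  -- gradient of φ
  have hφx : (fun y : EuclideanSpace ℝ (Fin (N - 1)) => φ (y, t)) =
      fun y => Real.sqrt (dualNorm H y ^ 2 + t ^ 2) ^ q * f (Real.arctan (t / dualNorm H y)) := by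
    funext y
    rw [hφ (y, t), hΦ0 (y, t), hq]
  have hgradφx : HasGradientAt (fun y : EuclideanSpace ℝ (Fin (N - 1)) => φ (y, t)) (c • v) x := by
    rw [hφx, hasGradientAt_iff_hasFDerivAt]
    have hcomp := hψr.comp_hasFDerivAt x ((hasGradientAt_iff_hasFDerivAt).1 hvgrad)
    have hCLM : (InnerProductSpace.toDual ℝ (EuclideanSpace ℝ (Fin (N - 1)))) (c • v) =
        c • (InnerProductSpace.toDual ℝ (EuclideanSpace ℝ (Fin (N - 1)))) v := by simp
    rw [hCLM]
    exact hcomp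
  have hφt : (fun s : ℝ => φ (x, s)) =
      fun s => Real.sqrt (r ^ 2 + s ^ 2) ^ q * f (Real.arctan (s / r)) := by
    funext s
    rw [hφ (x, s), hΦ0 (x, s), hq, hrdef]
  have hgrad2φ : grad2 φ (x, t) = (c • v, d) := by
    unfold grad2 gradX dT
    refine Prod.ext ?_ ?_
    · exact hgradφx.gradient
    · show deriv (fun s : ℝ => φ (x, s)) t = d
      rw [hφt]
      exact hψt.deriv
  -- gradient of Φ0 at (x,t)
  have hΦ0x : (fun y : EuclideanSpace ℝ (Fin (N - 1)) => Φ0 (y, t)) =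
      fun y => Real.sqrt (dualNorm H y ^ 2 + t ^ 2) := by
    funext y; rw [hΦ0 (y, t)]
  have hgradΦ0x : HasGradientAt (fun y : EuclideanSpace ℝ (Fin (N - 1)) => Φ0 (y, t))
      ((2 * r / (2 * ρ)) • v) x := by
    rw [hΦ0x, hasGradientAt_iff_hasFDerivAt]
    have hcomp := h2.comp_hasFDerivAt x ((hasGradientAt_iff_hasFDerivAt).1 hvgrad)
    have hCLM : (InnerProductSpace.toDual ℝ (EuclideanSpace ℝ (Fin (N - 1))))
        ((2 * r / (2 * ρ)) • v) =
        (2 * r / (2 * ρ)) • (InnerProductSpace.toDual ℝ (EuclideanSpace ℝ (Fin (N - 1)))) v := by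
      simp
    rw [hCLM]
    exact hcomp
  have hΦ0t : (fun s : ℝ => Φ0 (x, s)) = fun s => Real.sqrt (r ^ 2 + s ^ 2) := by
    funext s; rw [hΦ0 (x, s), hrdef]
  have hgrad2Φ0 : grad2 Φ0 (x, t) = ((2 * r / (2 * ρ)) • v, 2 * t / (2 * ρ)) := by
    unfold grad2 gradX dT
    refine Prod.ext ?_ ?_
    · exact hgradΦ0x.gradient
    · show deriv (fun s : ℝ => Φ0 (x, s)) t = 2 * t / (2 * ρ)
      rw [hΦ0t]
      exact k2.deriv
  -- value of Φ at the gradient point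
  have hHcv : H (c • v) = |c| := by rw [hH.homog, hHv, mul_one]
  have hΦval : Φ (c • v, d) = Real.sqrt (c ^ 2 + d ^ 2) := by
    rw [hΦ (c • v, d)]
    show Real.sqrt (H (c • v) ^ 2 + d ^ 2) = _
    rw [hHcv, sq_abs]
  set ρ₂ := Real.sqrt (c ^ 2 + d ^ 2) with hρ₂def
  have hcd : c ≠ 0 ∨ d ≠ 0 := by
    by_contra hcon
    push_neg at hcon
    apply hgrad
    rw [hgrad2φ, hcon.1, hcon.2]
    simp [Prod.ext_iff]
  have hcd2 : 0 < c ^ 2 + d ^ 2 := by rcases hcd with h | h <;> positivity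
  have hρ₂pos : 0 < ρ₂ := Real.sqrt_pos.2 hcd2
  -- gradient of H at multiples of v
  have hw : HasGradientAt H (r⁻¹ • x) v := FluxAux.hasGradientAt_H_max hH hx hHv hvx
  have hmain : ∀ c' : ℝ, c' ≠ 0 →
      HasGradientAt H ((c' / |c'|) • (r⁻¹ • x)) (c' • v) := by
    intro c' hc'
    rcases hc'.lt_or_gt with hneg | hpos
    · have hg1 := FluxAux.hasGradientAt_neg_point hH hw
      have hg2 := FluxAux.hasGradientAt_homog_pos hH hg1 (neg_pos.2 hneg)
      have e1 : (-c') • (-v) = c' • v := neg_smul_neg c' v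
      have e2 : c' / |c'| = -1 := by
        rw [abs_of_neg hneg]
        field_simp
      rw [e1] at hg2
      rw [e2, neg_one_smul]
      exact hg2
    · have hg2 := FluxAux.hasGradientAt_homog_pos hH hw hpos
      have e2 : c' / |c'| = 1 := by
        rw [abs_of_pos hpos]
        field_simp
      rw [e2, one_smul]
      exact hg2
  -- gradient of the spatial part of Φ at (c•v, d)
  have hΦxfun : (fun y : EuclideanSpace ℝ (Fin (N - 1)) => Φ (y, d)) =
      fun y => Real.sqrt (H y ^ 2 + d ^ 2) := by
    funext y; rw [hΦ (y, d)]
  have hgradΦx : HasGradientAt (fun y : EuclideanSpace ℝ (Fin (N - 1)) => Φ (y, d))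
      ((c / ρ₂) • (r⁻¹ • x)) (c • v) := by
    rw [hΦxfun]
    by_cases hc0 : c = 0
    · have hd0 : d ≠ 0 := hcd.resolve_left (not_not_intro hc0)
      simp only [hc0, zero_div, zero_smul]
      have base : HasFDerivAt (fun ξ : EuclideanSpace ℝ (Fin (N - 1)) => H ξ ^ 2 + d ^ 2)
          (0 : EuclideanSpace ℝ (Fin (N - 1)) →L[ℝ] ℝ) 0 :=
        (FluxAux.hasFDerivAt_Hsq_zero hH).add_const (d ^ 2)
      have hne0 : H (0 : EuclideanSpace ℝ (Fin (N - 1))) ^ 2 + d ^ 2 ≠ 0 := by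
        rw [FluxAux.H_zero hH]
        positivity
      have hcomp := (hasDerivAt_sqrt hne0).comp_hasFDerivAt 0 base
      rw [hasGradientAt_iff_hasFDerivAt, map_zero]
      rw [smul_zero] at hcomp
      exact hcomp
    · have habs : |c| ≠ 0 := abs_ne_zero.2 hc0
      have habspos : 0 < |c| := abs_pos.2 hc0
      have hτ : HasDerivAt (fun s : ℝ => Real.sqrt (s ^ 2 + d ^ 2))
          (2 * |c| / (2 * Real.sqrt (c ^ 2 + d ^ 2))) (|c|) := by
        have hh : HasDerivAt (fun s : ℝ => s ^ 2 + d ^ 2) (2 * |c|) (|c|) := by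
          simpa using (hasDerivAt_pow 2 (|c|)).add_const (d ^ 2)
        have h0 : |c| ^ 2 + d ^ 2 ≠ 0 := by rw [sq_abs]; exact hcd2.ne'
        have := hh.sqrt h0
        simpa [sq_abs] using this
      have hτ' : HasDerivAt (fun s : ℝ => Real.sqrt (s ^ 2 + d ^ 2))
          (2 * |c| / (2 * Real.sqrt (c ^ 2 + d ^ 2))) (H (c • v)) := by
        rw [hHcv]; exact hτ
      have hcomp := hτ'.comp_hasFDerivAt (c • v)
        ((hasGradientAt_iff_hasFDerivAt).1 (hmain c hc0))
      rw [hasGradientAt_iff_hasFDerivAt]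
      have habs_cancel : ∀ a s : ℝ, a ≠ 0 → s ≠ 0 → 2 * |a| / (2 * s) * (a / |a|) = a / s := by
        intro a s ha hs
        have h' : |a| ≠ 0 := abs_ne_zero.2 ha
        field_simp
      have hsc : (2 * |c| / (2 * Real.sqrt (c ^ 2 + d ^ 2))) • ((c / |c|) • (r⁻¹ • x)) =
          (c / ρ₂) • (r⁻¹ • x) := by
        rw [smul_smul, ← hρ₂def, habs_cancel c ρ₂ hc0 hρ₂pos.ne']
      rw [← hsc, _root_.map_smul]
      exact hcomp
  -- t-derivative of Φ at (c•v, d)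
  have hΦtfun : (fun s : ℝ => Φ (c • v, s)) = fun s => Real.sqrt (c ^ 2 + s ^ 2) := by
    funext s
    rw [hΦ (c • v, s)]
    show Real.sqrt (H (c • v) ^ 2 + s ^ 2) = _
    rw [hHcv, sq_abs]
  have hdTΦ : deriv (fun s : ℝ => Φ (c • v, s)) d = 2 * d / (2 * ρ₂) := by
    rw [hΦtfun]
    have hh : HasDerivAt (fun s : ℝ => c ^ 2 + s ^ 2) (2 * d) d := by
      simpa using (hasDerivAt_pow 2 d).const_add (c ^ 2)
    exact (hh.sqrt hcd2.ne').deriv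
  have hgrad2Φ : grad2 Φ (c • v, d) = ((c / ρ₂) • (r⁻¹ • x), 2 * d / (2 * ρ₂)) := by
    unfold grad2 gradX dT
    refine Prod.ext ?_ ?_
    · exact hgradΦx.gradient
    · exact hdTΦ
  -- value of φ and Φ0 at (x,t)
  have hΦ0val : Φ0 (x, t) = ρ := by
    rw [hΦ0 (x, t)]
  have hφval : φ (x, t) = P * F := by
    rw [hφ (x, t), hΦ0 (x, t)]
  -- the key algebraic identity
  have hPB : P / ρ ^ 2 * ρ ^ 2 = P := div_mul_cancel₀ P (pow_ne_zero 2 hρpos.ne')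
  have hsum : c * r + d * t = q * F * P := by
    rw [hc, hd]
    linear_combination (q * F) * hPB + (-(q * F) * (P / ρ ^ 2)) * hρsq
  -- finish
  rw [hgrad2φ, hgrad2Φ, hgrad2Φ0, hΦval, hΦ0val, hφval]
  simp only [Prod.smul_mk, smul_eq_mul]
  rw [real_inner_smul_left, real_inner_smul_left, real_inner_smul_left, real_inner_smul_right]
  have hxv : (inner ℝ x v : ℝ) = r := by rw [real_inner_comm]; exact hvx
  rw [hxv]
  have hfinal : ρ₂ * (c / ρ₂ * (r⁻¹ * (2 * r / (2 * ρ) * r))) +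
      ρ₂ * (2 * d / (2 * ρ₂)) * (2 * t / (2 * ρ)) = (c * r + d * t) / ρ := by
    field_simp
  rw [hfinal, hsum, hq]
  field_simp
  ring
end
end
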